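/- arXiv:1201.5239 — 10 statements merged into one kernel-verified Lean document; each statement's English description precedes it below -/
import Mathlib

section
/- For every set S of sorts, the category Alg(H_S) of Hall algebras for S and the category Alg(B_S) of Bénabou algebras for S are equivalent categories. -/
open CategoryTheory

universe u

namespace Stmt0

/-- A Hall algebra for a set of sorts `S` (words on `S` being represented as functions
`Fin m → S`): an `S* × S`-sorted family of sets equipped with projections and substitution
operations satisfying the Hall axioms (H1)–(H3). -/
structure HallAlgebra (S : Type u) : Type (u + 1) where
  carrier : ∀ m : ℕ, (Fin m → S) → S → Type u
  proj : ∀ (m : ℕ) (w : Fin m → S) (i : Fin m), carrier m w (w i)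
  subst : ∀ (n m : ℕ) (u : Fin n → S) (w : Fin m → S) (s : S),
    carrier m w s → (∀ i : Fin m, carrier n u (w i)) → carrier n u s
  H1 : ∀ (n m : ℕ) (u : Fin n → S) (w : Fin m → S) (i : Fin m)
      (b : ∀ j : Fin m, carrier n u (w j)),
    subst n m u w (w i) (proj m w i) b = b i
  H2 : ∀ (n : ℕ) (u : Fin n → S) (s : S) (a : carrier n u s),
    subst n n u u s a (proj n u) = a
  H3 : ∀ (n k m : ℕ) (u : Fin n → S) (v : Fin k → S) (w : Fin m → S) (s : S)
      (a : carrier m w s) (b : ∀ j : Fin m, carrier k v (w j))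
      (c : ∀ l : Fin k, carrier n u (v l)),
    subst n k u v s (subst k m v w s a b) c
      = subst n m u w s a (fun j => subst n k u v (w j) (b j) c)

/-- A homomorphism of Hall algebras. -/
@[ext]
structure HallHom {S : Type u} (A B : HallAlgebra S) where
  app : ∀ (m : ℕ) (w : Fin m → S) (s : S), A.carrier m w s → B.carrier m w s
  map_proj : ∀ (m : ℕ) (w : Fin m → S) (i : Fin m),
    app m w (w i) (A.proj m w i) = B.proj m w i
  map_subst : ∀ (n m : ℕ) (u : Fin n → S) (w : Fin m → S) (s : S)
      (a : A.carrier m w s) (b : ∀ i : Fin m, A.carrier n u (w i)),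
    app n u s (A.subst n m u w s a b)
      = B.subst n m u w s (app m w s a) (fun j => app n u (w j) (b j))

/-- The category of Hall algebras for `S`. -/
instance {S : Type u} : Category (HallAlgebra S) where
  Hom := HallHom
  id A :=
    { app := fun _ _ _ a => a
      map_proj := fun _ _ _ => rfl
      map_subst := fun _ _ _ _ _ _ _ => rfl }
  comp f g :=
    { app := fun m w s a => g.app m w s (f.app m w s a)
      map_proj := fun m w i => by simp only [f.map_proj, g.map_proj]
      map_subst := fun n m u w s a b => by
        simp only [f.map_subst, g.map_subst]
        try rfl }
  id_comp f := rfl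
  comp_id f := rfl
  assoc f g h := rfl

/-- A Bénabou algebra for a set of sorts `S`: an `S* × S*`-sorted family of sets equipped with
projections, finite tuplings and compositions satisfying the Bénabou axioms (B1)–(B5). -/
structure BenabouAlgebra (S : Type u) : Type (u + 1) where
  carrier : ∀ (n m : ℕ), (Fin n → S) → (Fin m → S) → Type u
  proj : ∀ (m : ℕ) (w : Fin m → S) (i : Fin m), carrier m 1 w (fun _ => w i)
  tupl : ∀ (n m : ℕ) (u : Fin n → S) (w : Fin m → S),
    (∀ i : Fin m, carrier n 1 u (fun _ => w i)) → carrier n m u w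
  comp : ∀ (n k m : ℕ) (u : Fin n → S) (x : Fin k → S) (w : Fin m → S),
    carrier k m x w → carrier n k u x → carrier n m u w
  B1 : ∀ (n m : ℕ) (u : Fin n → S) (w : Fin m → S) (i : Fin m)
      (a : ∀ j : Fin m, carrier n 1 u (fun _ => w j)),
    comp n m 1 u w (fun _ => w i) (proj m w i) (tupl n m u w a) = a i
  B2 : ∀ (n m : ℕ) (u : Fin n → S) (w : Fin m → S) (a : carrier n m u w),
    comp n n m u u w a (tupl n n u u (proj n u)) = a
  B3 : ∀ (n m : ℕ) (u : Fin n → S) (w : Fin m → S) (a : carrier n m u w),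
    tupl n m u w (fun i => comp n m 1 u w (fun _ => w i) (proj m w i) a) = a
  B4 : ∀ (m : ℕ) (w : Fin m → S) (hm : 0 < m),
    tupl m 1 w (fun _ => w ⟨0, hm⟩) (fun _ => proj m w ⟨0, hm⟩) = proj m w ⟨0, hm⟩
  B5 : ∀ (n k m l : ℕ) (u : Fin n → S) (x : Fin k → S) (w : Fin m → S) (y : Fin l → S)
      (a : carrier n k u x) (b : carrier k m x w) (c : carrier m l w y),
    comp n m l u w y c (comp n k m u x w b a)
      = comp n k l u x y (comp k m l x w y c b) a

/-- A homomorphism of Bénabou algebras. -/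
@[ext]
structure BenabouHom {S : Type u} (A B : BenabouAlgebra S) where
  app : ∀ (n m : ℕ) (u : Fin n → S) (w : Fin m → S), A.carrier n m u w → B.carrier n m u w
  map_proj : ∀ (m : ℕ) (w : Fin m → S) (i : Fin m),
    app m 1 w (fun _ => w i) (A.proj m w i) = B.proj m w i
  map_tupl : ∀ (n m : ℕ) (u : Fin n → S) (w : Fin m → S)
      (a : ∀ i : Fin m, A.carrier n 1 u (fun _ => w i)),
    app n m u w (A.tupl n m u w a)
      = B.tupl n m u w (fun i => app n 1 u (fun _ => w i) (a i))
  map_comp : ∀ (n k m : ℕ) (u : Fin n → S) (x : Fin k → S) (w : Fin m → S)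
      (a : A.carrier k m x w) (b : A.carrier n k u x),
    app n m u w (A.comp n k m u x w a b)
      = B.comp n k m u x w (app k m x w a) (app n k u x b)

/-- The category of Bénabou algebras for `S`. -/
instance {S : Type u} : Category (BenabouAlgebra S) where
  Hom := BenabouHom
  id A :=
    { app := fun _ _ _ _ a => a
      map_proj := fun _ _ _ => rfl
      map_tupl := fun _ _ _ _ _ => rfl
      map_comp := fun _ _ _ _ _ _ _ _ => rfl }
  comp f g :=
    { app := fun n m u w a => g.app n m u w (f.app n m u w a)
      map_proj := fun m w i => by simp only [f.map_proj, g.map_proj]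
      map_tupl := fun n m u w a => by
        simp only [f.map_tupl, g.map_tupl]
        try rfl
      map_comp := fun n k m u x w a b => by
        simp only [f.map_comp, g.map_comp] }
  id_comp f := rfl
  comp_id f := rfl
  assoc f g h := rfl

section Aux

variable {S : Type u}

/-- Derived law: composition with a tupling on the left. -/
theorem BenabouAlgebra.comp_tupl (B : BenabouAlgebra S) (n k m : ℕ)
    (u : Fin n → S) (x : Fin k → S) (w : Fin m → S)
    (b : ∀ i : Fin m, B.carrier k 1 x (fun _ => w i)) (c : B.carrier n k u x) :
    B.comp n k m u x w (B.tupl k m x w b) c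
      = B.tupl n m u w (fun i => B.comp n k 1 u x (fun _ => w i) (b i) c) := by
  conv_lhs => rw [← B.B3 n m u w (B.comp n k m u x w (B.tupl k m x w b) c)]
  congr 1
  funext i
  rw [B.B5, B.B1]

/-- Derived law: the one-letter projection is a left identity. -/
theorem BenabouAlgebra.proj_comp_single (B : BenabouAlgebra S) (n : ℕ)
    (u : Fin n → S) (s : S) (a : B.carrier n 1 u (fun _ => s)) :
    B.comp n 1 1 u (fun _ => s) (fun _ => s)
      (B.proj 1 (fun _ => s) ⟨0, one_pos⟩) a = a := by
  have h3 := B.B3 n 1 u (fun _ => s) a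
  have hent : (fun i : Fin 1 => B.comp n 1 1 u (fun _ => s) (fun _ => s)
      (B.proj 1 (fun _ => s) i) a)
      = fun _ : Fin 1 => B.comp n 1 1 u (fun _ => s) (fun _ => s)
          (B.proj 1 (fun _ => s) ⟨0, one_pos⟩) a := by
    funext i
    have : i = ⟨0, one_pos⟩ := Subsingleton.elim _ _
    rw [this]
  rw [hent] at h3
  -- now `a = tupl (fun _ => comp proj₀ a)`; compare with the same for `comp proj₀ a`
  have h4 := B.B4 1 (fun _ => s) one_pos
  calc B.comp n 1 1 u (fun _ => s) (fun _ => s)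
        (B.proj 1 (fun _ => s) ⟨0, one_pos⟩) a
      = B.comp n 1 1 u (fun _ => s) (fun _ => s)
        (B.tupl 1 1 (fun _ => s) (fun _ => s)
          (fun _ => B.proj 1 (fun _ => s) ⟨0, one_pos⟩)) a := by rw [h4]
    _ = B.tupl n 1 u (fun _ => s)
        (fun _ => B.comp n 1 1 u (fun _ => s) (fun _ => s)
          (B.proj 1 (fun _ => s) ⟨0, one_pos⟩) a) := B.comp_tupl _ _ _ _ _ _ _ _
    _ = a := h3

/-- Derived law: tupling a single one-letter morphism gives it back. -/
theorem BenabouAlgebra.tupl_single (B : BenabouAlgebra S) (n : ℕ)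
    (u : Fin n → S) (s : S) (a : B.carrier n 1 u (fun _ => s)) :
    B.tupl n 1 u (fun _ => s) (fun _ => a) = a := by
  conv_rhs => rw [← B.B3 n 1 u (fun _ => s) a]
  congr 1
  funext i
  have hi : i = ⟨0, one_pos⟩ := Subsingleton.elim _ _
  rw [hi, B.proj_comp_single]

/-- The Bénabou algebra associated with a Hall algebra. -/
def HallAlgebra.toBenabou (A : HallAlgebra S) : BenabouAlgebra S where
  carrier n m u w := ∀ i : Fin m, A.carrier n u (w i)
  proj m w i := fun _ => A.proj m w i
  tupl n m u w a := fun i => a i ⟨0, one_pos⟩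
  comp n k m u x w Q P := fun j => A.subst n k u x (w j) (Q j) P
  B1 := by
    intro n m u w i a
    funext j
    have hj : j = ⟨0, one_pos⟩ := Subsingleton.elim _ _
    rw [hj]
    exact A.H1 n m u w i _
  B2 := by
    intro n m u w a
    funext j
    exact A.H2 n u (w j) (a j)
  B3 := by
    intro n m u w a
    funext i
    exact A.H1 n m u w i a
  B4 := by intro m w hm; rfl
  B5 := by
    intro n k m l u x w y a b c
    funext j
    exact (A.H3 n k m u x w (y j) (c j) b a).symm

/-- The Hall algebra associated with a Bénabou algebra. -/
def BenabouAlgebra.toHall (B : BenabouAlgebra S) : HallAlgebra S where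
  carrier m w s := B.carrier m 1 w (fun _ => s)
  proj := B.proj
  subst n m u w s a b := B.comp n m 1 u w (fun _ => s) a (B.tupl n m u w b)
  H1 := by
    intro n m u w i b
    exact B.B1 n m u w i b
  H2 := by
    intro n u s a
    exact B.B2 n 1 u (fun _ => s) a
  H3 := by
    intro n k m u v w s a b c
    show B.comp n k 1 u v (fun _ => s)
        (B.comp k m 1 v w (fun _ => s) a (B.tupl k m v w b)) (B.tupl n k u v c) = _
    rw [← B.B5, B.comp_tupl]

/-- The functor from Hall algebras to Bénabou algebras. -/
def hallToBenabou : HallAlgebra S ⥤ BenabouAlgebra S where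
  obj A := A.toBenabou
  map {A A'} h :=
    { app := fun n m u w Q i => h.app n u (w i) (Q i)
      map_proj := fun m w i => by
        funext j
        exact h.map_proj m w i
      map_tupl := fun n m u w a => rfl
      map_comp := fun n k m u x w Q P => by
        funext j
        exact h.map_subst n k u x (w j) (Q j) P }
  map_id A := rfl
  map_comp f g := rfl

/-- The functor from Bénabou algebras to Hall algebras. -/
def benabouToHall : BenabouAlgebra S ⥤ HallAlgebra S where
  obj B := B.toHall
  map {B B'} g :=
    { app := fun m w s a => g.app m 1 w (fun _ => s) a
      map_proj := fun m w i => g.map_proj m w i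
      map_subst := fun n m u w s a b => by
        show g.app n 1 u (fun _ => s) (B.comp n m 1 u w (fun _ => s) a (B.tupl n m u w b)) = _
        exact (g.map_comp n m 1 u w (fun _ => s) a (B.tupl n m u w b)).trans
          (congrArg (B'.comp n m 1 u w (fun _ => s) (g.app m 1 w (fun _ => s) a))
            (g.map_tupl n m u w b)) }
  map_id B := rfl
  map_comp f g := rfl

end Aux

/-- **(Fujiwara–Climent–Soliveres.)** For every set of sorts `S`, the category of Hall algebras
for `S` and the category of Bénabou algebras for `S` are equivalent. -/
theorem hallAlgebra_equiv_benabouAlgebra (S : Type u) :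
    Nonempty (HallAlgebra S ≌ BenabouAlgebra S) := by
  refine ⟨CategoryTheory.Equivalence.mk hallToBenabou benabouToHall ?_ ?_⟩
  · -- unit iso `𝟭 ≅ F ⋙ G`
    refine NatIso.ofComponents (fun A => ?_) (fun {A A'} h => ?_)
    · refine ⟨
        { app := fun m w s a => fun _ => a
          map_proj := fun m w i => rfl
          map_subst := fun n m u w s a b => rfl },
        { app := fun m w s a => a ⟨0, one_pos⟩
          map_proj := fun m w i => rfl
          map_subst := fun n m u w s a b => rfl }, ?_, ?_⟩
      · apply HallHom.ext
        funext m w s a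
        rfl
      · apply HallHom.ext
        funext m w s a
        show (fun _ : Fin 1 => a ⟨0, one_pos⟩) = a
        funext j
        have hj : j = ⟨0, one_pos⟩ := Subsingleton.elim _ _
        rw [hj]
    · apply HallHom.ext
      funext m w s a
      rfl
  · -- counit iso `G ⋙ F ≅ 𝟭`
    refine NatIso.ofComponents (fun B => ?_) (fun {B B'} g => ?_)
    · refine ⟨
        { app := fun n m u w Q => B.tupl n m u w Q
          map_proj := fun m w i => ?_
          map_tupl := fun n m u w a => ?_
          map_comp := fun n k m u x w Q P => ?_ },
        { app := fun n m u w a => fun i =>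
            B.comp n m 1 u w (fun _ => w i) (B.proj m w i) a
          map_proj := fun m w i => ?_
          map_tupl := fun n m u w a => ?_
          map_comp := fun n k m u x w Q P => ?_ }, ?_, ?_⟩
      · -- tupl of constant proj family is proj
        show B.tupl m 1 w (fun _ => w i) (fun _ => B.proj m w i) = B.proj m w i
        exact B.tupl_single m w (w i) (B.proj m w i)
      · -- tupl compatibility
        show B.tupl n m u w (fun i => a i ⟨0, one_pos⟩)
            = B.tupl n m u w (fun i => B.tupl n 1 u (fun _ => w i) (a i))
        congr 1
        funext i
        exact (B.tupl_single n u (w i) (a i ⟨0, one_pos⟩)).symm.trans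
          (congrArg (B.tupl n 1 u (fun _ => w i))
            (funext fun j => congrArg (a i) (Subsingleton.elim _ _)))
      · -- comp compatibility
        show B.tupl n m u w
            (fun j => B.comp n k 1 u x (fun _ => w j) (Q j) (B.tupl n k u x P))
            = B.comp n k m u x w (B.tupl k m x w Q) (B.tupl n k u x P)
        exact (B.comp_tupl n k m u x w Q (B.tupl n k u x P)).symm
      · -- inverse map_proj
        funext j
        have hj : j = ⟨0, one_pos⟩ := Subsingleton.elim _ _
        rw [hj]
        exact B.proj_comp_single m w (w i) (B.proj m w i)
      · -- inverse map_tupl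
        funext i
        show B.comp n m 1 u w (fun _ => w i) (B.proj m w i) (B.tupl n m u w a)
            = B.comp n 1 1 u (fun _ => w i) (fun _ => w i)
                (B.proj 1 (fun _ => w i) ⟨0, one_pos⟩) (a i)
        rw [B.B1, B.proj_comp_single]
      · -- inverse map_comp
        funext j
        show B.comp n m 1 u w (fun _ => w j) (B.proj m w j) (B.comp n k m u x w Q P)
            = B.comp n k 1 u x (fun _ => w j)
                (B.comp k m 1 x w (fun _ => w j) (B.proj m w j) Q)
                (B.tupl n k u x (fun i =>
                  B.comp n k 1 u x (fun _ => x i) (B.proj k x i) P))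
        rw [B.B3, B.B5]
      · apply BenabouHom.ext
        funext n m u w Q
        funext i
        show B.comp n m 1 u w (fun _ => w i) (B.proj m w i) (B.tupl n m u w Q) = Q i
        exact B.B1 n m u w i Q
      · apply BenabouHom.ext
        funext n m u w a
        exact B.B3 n m u w a
    · apply BenabouHom.ext
      funext n m u w Q
      exact (g.map_tupl n m u w Q).symm

end Stmt0
end

section
/- Let (φ, d) : (S, Σ) → (T, Λ) be a morphism of many-sorted signatures. Then the reduct functor d^* : Alg(Λ) → Alg(Σ) — which sends a Λ-algebra (B, G) to the Σ-algebra (B_φ, G^d), where for σ ∈ Σ_{w,s} the operation G^d_σ is G_{d(σ)} : B_{φ*(w)} → B_{φ(s)} (noting (B_φ)_w = B_{φ*(w)}), and which sends a Λ-homomorphism f to f_φ = (f_{φ(s)})_{s∈S} — has a left adjoint. -/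
open CategoryTheory

universe u

namespace Stmt2

variable {S T : Type u}

/-- A `Σ`-algebra for an `S`-sorted signature `Sg` (words on `S` being represented as functions
`Fin n → S`): an `S`-sorted set together with, for every formal operation `σ ∈ Σ_{w,s}`, an
operation `A_w → A_s`. -/
structure Alg (Sg : ∀ n : ℕ, (Fin n → S) → S → Type u) : Type (u + 1) where
  carrier : S → Type u
  ops : ∀ (n : ℕ) (w : Fin n → S) (s : S),
    Sg n w s → (∀ i : Fin n, carrier (w i)) → carrier s

/-- A `Σ`-homomorphism. -/
structure AlgHom {Sg : ∀ n : ℕ, (Fin n → S) → S → Type u} (A B : Alg Sg) where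
  app : ∀ s, A.carrier s → B.carrier s
  map_ops : ∀ (n : ℕ) (w : Fin n → S) (s : S) (σ : Sg n w s) (a : ∀ i, A.carrier (w i)),
    app s (A.ops n w s σ a) = B.ops n w s σ (fun i => app (w i) (a i))

instance {Sg : ∀ n : ℕ, (Fin n → S) → S → Type u} : Category (Alg Sg) where
  Hom := AlgHom
  id A := ⟨fun _ a => a, fun _ _ _ _ _ => rfl⟩
  comp f g := ⟨fun s a => g.app s (f.app s a), by
    intro n w s σ a
    simp only [f.map_ops, g.map_ops]
    try rfl⟩
  id_comp f := rfl
  comp_id f := rfl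
  assoc f g h := rfl

/-- The reduct functor `d^* : Alg(Λ) ⥤ Alg(Σ)` along a signature morphism `(φ, d)`. -/
def reduct (φ : S → T) (Sg : ∀ n : ℕ, (Fin n → S) → S → Type u)
    (Lm : ∀ n : ℕ, (Fin n → T) → T → Type u)
    (d : ∀ (n : ℕ) (w : Fin n → S) (s : S), Sg n w s → Lm n (φ ∘ w) (φ s)) :
    Alg Lm ⥤ Alg Sg where
  obj B :=
    { carrier := fun s => B.carrier (φ s)
      ops := fun n w s σ a => B.ops n (φ ∘ w) (φ s) (d n w s σ) a }
  map f :=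
    { app := fun s => f.app (φ s)
      map_ops := fun n w s σ a => f.map_ops n (φ ∘ w) (φ s) (d n w s σ) a }
  map_id B := rfl
  map_comp f g := rfl

theorem AlgHom.ext' {Sg : ∀ n : ℕ, (Fin n → S) → S → Type u} {A B : Alg Sg}
    {f g : AlgHom A B} (h : f.app = g.app) : f = g := by
  cases f; cases g; cases h; rfl

section Free

variable (φ : S → T) (Sg : ∀ n : ℕ, (Fin n → S) → S → Type u)
  (Lm : ∀ n : ℕ, (Fin n → T) → T → Type u)
  (d : ∀ (n : ℕ) (w : Fin n → S) (s : S), Sg n w s → Lm n (φ ∘ w) (φ s))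
  (A : Alg Sg)

/-- Terms of the free `Λ`-algebra on a `Σ`-algebra `A`. -/
inductive Term : T → Type u
  | var (s : S) (a : A.carrier s) : Term (φ s)
  | op (n : ℕ) (w : Fin n → T) (t : T) (l : Lm n w t) (ts : ∀ i, Term (w i)) : Term t

/-- The congruence generated by the images of the operations of `A`. -/
inductive Rel : ∀ t, Term φ Sg Lm A t → Term φ Sg Lm A t → Prop
  | refl (t) (x) : Rel t x x
  | symm (t) (x y) : Rel t x y → Rel t y x
  | trans (t) (x y z) : Rel t x y → Rel t y z → Rel t x z
  | op (n w t) (l : Lm n w t) (ts ts') :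
      (∀ i, Rel (w i) (ts i) (ts' i)) → Rel t (.op n w t l ts) (.op n w t l ts')
  | mor (n w s) (σ : Sg n w s) (a : ∀ i, A.carrier (w i)) :
      Rel (φ s) (.var s (A.ops n w s σ a))
        (.op n (φ ∘ w) (φ s) (d n w s σ) (fun i => .var (w i) (a i)))

def termSetoid (t : T) : Setoid (Term φ Sg Lm A t) :=
  ⟨Rel φ Sg Lm d A t, ⟨Rel.refl t, Rel.symm t _ _, Rel.trans t _ _ _⟩⟩

/-- The free `Λ`-algebra on `A`. -/
def FreeAlg : Alg Lm where
  carrier t := Quotient (termSetoid φ Sg Lm d A t)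
  ops n w t l qs :=
    Quotient.map (fun ts => Term.op n w t l ts)
      (fun ts ts' h => Rel.op n w t l ts ts' h) (Quotient.finChoice qs)

theorem freeOps_mk (n : ℕ) (w : Fin n → T) (t : T) (l : Lm n w t)
    (ts : ∀ i, Term φ Sg Lm A (w i)) :
    (FreeAlg φ Sg Lm d A).ops n w t l (fun i => ⟦ts i⟧) = ⟦Term.op n w t l ts⟧ := by
  show Quotient.map (fun ts => Term.op n w t l ts)
      (fun ts ts' h => Rel.op n w t l ts ts' h) (Quotient.finChoice (⟦ts ·⟧)) = _
  rw [Quotient.finChoice_eq]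
  rfl

variable {A} {B : Alg Lm} (f : AlgHom A ((reduct φ Sg Lm d).obj B))

/-- Evaluation of terms along `f`. -/
def eval : ∀ t, Term φ Sg Lm A t → B.carrier t
  | _, .var s a => f.app s a
  | _, .op n w t l ts => B.ops n w t l (fun i => eval (w i) (ts i))

theorem eval_rel {t : T} {x y : Term φ Sg Lm A t} (h : Rel φ Sg Lm d A t x y) :
    eval φ Sg Lm d f t x = eval φ Sg Lm d f t y := by
  induction h with
  | refl => rfl
  | symm _ _ _ _ ih => exact ih.symm
  | trans _ _ _ _ _ _ ih1 ih2 => exact ih1.trans ih2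
  | op n w t l ts ts' _ ih => exact congrArg (B.ops n w t l) (funext ih)
  | mor n w s σ a => exact f.map_ops n w s σ a

/-- Lifted evaluation. -/
def evalQ (t : T) : (FreeAlg φ Sg Lm d A).carrier t → B.carrier t :=
  Quotient.lift (eval φ Sg Lm d f t) (fun _ _ h => eval_rel φ Sg Lm d f h)

theorem evalQ_ops (n : ℕ) (w : Fin n → T) (t : T) (l : Lm n w t)
    (qs : ∀ i, (FreeAlg φ Sg Lm d A).carrier (w i)) :
    evalQ φ Sg Lm d f t ((FreeAlg φ Sg Lm d A).ops n w t l qs) =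
      B.ops n w t l (fun i => evalQ φ Sg Lm d f (w i) (qs i)) := by
  have : qs = fun i => ⟦(qs i).out⟧ := funext fun i => (Quotient.out_eq _).symm
  rw [this, freeOps_mk]
  rfl

/-- The hom-set equivalence of the adjunction. -/
def homEquiv (B : Alg Lm) :
    (FreeAlg φ Sg Lm d A ⟶ B) ≃ (A ⟶ (reduct φ Sg Lm d).obj B) where
  toFun g :=
    { app := fun s a => g.app (φ s) ⟦Term.var s a⟧
      map_ops := fun n w s σ a => by
        have h1 : (⟦Term.var s (A.ops n w s σ a)⟧ :
            (FreeAlg φ Sg Lm d A).carrier (φ s)) =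
            ⟦Term.op n (φ ∘ w) (φ s) (d n w s σ) (fun i => Term.var (w i) (a i))⟧ :=
          Quotient.sound (Rel.mor n w s σ a)
        show g.app (φ s) ⟦Term.var s (A.ops n w s σ a)⟧ = _
        rw [h1, ← freeOps_mk]
        exact g.map_ops _ _ _ _ _ }
  invFun f :=
    { app := evalQ φ Sg Lm d f
      map_ops := fun n w t l qs => evalQ_ops φ Sg Lm d f n w t l qs }
  left_inv g := by
    apply AlgHom.ext'
    funext t q
    induction q using Quotient.ind with | _ x =>
    show evalQ φ Sg Lm d _ t ⟦x⟧ = g.app t ⟦x⟧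
    induction x with
    | var s a => rfl
    | op n w t l ts ih =>
      show B.ops n w t l (fun i => evalQ φ Sg Lm d _ (w i) ⟦ts i⟧) = _
      rw [funext ih, ← freeOps_mk]
      exact (g.map_ops _ _ _ _ _).symm
  right_inv f := by
    apply AlgHom.ext'
    rfl

end Free

/-- The reduct functor along a signature morphism has a left adjoint. -/
theorem reduct_hasLeftAdjoint (φ : S → T) (Sg : ∀ n : ℕ, (Fin n → S) → S → Type u)
    (Lm : ∀ n : ℕ, (Fin n → T) → T → Type u)
    (d : ∀ (n : ℕ) (w : Fin n → S) (s : S), Sg n w s → Lm n (φ ∘ w) (φ s)) :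
    ∃ L : Alg Sg ⥤ Alg Lm, Nonempty (L ⊣ reduct φ Sg Lm d) := by
  have he : ∀ (X : Alg Sg) (Y Y' : Alg Lm) (g : Y ⟶ Y')
      (h : FreeAlg φ Sg Lm d X ⟶ Y),
      homEquiv φ Sg Lm d Y' (h ≫ g) =
        homEquiv φ Sg Lm d Y h ≫ (reduct φ Sg Lm d).map g := fun X Y Y' g h =>
    AlgHom.ext' rfl
  exact ⟨Adjunction.leftAdjointOfEquiv (fun X Y => homEquiv φ Sg Lm d Y) he,
    ⟨Adjunction.adjunctionOfEquivLeft _ he⟩⟩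

end Stmt2
end

section
/- The category Alg of many-sorted algebras — whose objects are pairs ((S, Σ), A) with (S, Σ) a many-sorted signature and A a Σ-algebra, whose morphisms ((S, Σ), A) → ((T, Λ), B) are pairs ((φ, d), f) with (φ, d) a signature morphism and f : A → d^*(B) a Σ-homomorphism, and whose composition is ((ψ, e), g) ∘ ((φ, d), f) = ((ψ∘φ, e_{φ*×φ} ∘ d), d^*(g) ∘ f) — is complete and cocomplete. -/
open CategoryTheory Limits

namespace Stmt3

/-- A many-sorted signature `(S, Σ)`, words on `S` being represented as functions `Fin n → S`. -/
structure Sig : Type 1 where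
  sorts : Type
  ops : ∀ n : ℕ, (Fin n → sorts) → sorts → Type

/-- An object of the category `Alg`: a pair `((S, Σ), A)` with `(S, Σ)` a signature and `A`
a `Σ`-algebra. -/
structure Alg : Type 1 where
  sig : Sig
  carrier : sig.sorts → Type
  str : ∀ (n : ℕ) (w : Fin n → sig.sorts) (s : sig.sorts),
    sig.ops n w s → (∀ i : Fin n, carrier (w i)) → carrier s

/-- A morphism of `Alg`: a signature morphism `(φ, d)` together with a `Σ`-homomorphism
`f : A → d^*(B)`. -/
structure AlgHom (A B : Alg) where
  sortMap : A.sig.sorts → B.sig.sorts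
  opMap : ∀ (n : ℕ) (w : Fin n → A.sig.sorts) (s : A.sig.sorts),
    A.sig.ops n w s → B.sig.ops n (sortMap ∘ w) (sortMap s)
  app : ∀ s, A.carrier s → B.carrier (sortMap s)
  map_ops : ∀ (n : ℕ) (w : Fin n → A.sig.sorts) (s : A.sig.sorts)
      (σ : A.sig.ops n w s) (a : ∀ i, A.carrier (w i)),
    app s (A.str n w s σ a)
      = B.str n (sortMap ∘ w) (sortMap s) (opMap n w s σ) (fun i => app (w i) (a i))

instance : Category Alg where
  Hom := AlgHom
  id A :=
    { sortMap := fun s => s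
      opMap := fun _ _ _ σ => σ
      app := fun _ a => a
      map_ops := fun _ _ _ _ _ => rfl }
  comp f g :=
    { sortMap := fun s => g.sortMap (f.sortMap s)
      opMap := fun n w s σ => g.opMap n (f.sortMap ∘ w) (f.sortMap s) (f.opMap n w s σ)
      app := fun s a => g.app (f.sortMap s) (f.app s a)
      map_ops := fun n w s σ a => by
        simp only [f.map_ops, g.map_ops]
        try rfl }
  id_comp f := rfl
  comp_id f := rfl
  assoc f g h := rfl

/-! ### helpers -/

lemma Alg.str_congr (B : Alg) {n : ℕ} {w w' : Fin n → B.sig.sorts} {s s' : B.sig.sorts}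
    (hw : w = w') (hs : s = s') {σ : B.sig.ops n w s} {σ' : B.sig.ops n w' s'}
    (hσ : HEq σ σ') {a : ∀ i, B.carrier (w i)} {a' : ∀ i, B.carrier (w' i)}
    (ha : ∀ i, HEq (a i) (a' i)) : HEq (B.str n w s σ a) (B.str n w' s' σ' a') := by
  subst hw; subst hs
  cases hσ
  have : a = a' := funext fun i => eq_of_heq (ha i)
  subst this; rfl

lemma AlgHom.ext'' {A B : Alg} {f g : AlgHom A B} (h1 : f.sortMap = g.sortMap)
    (h2 : ∀ n w s σ, HEq (f.opMap n w s σ) (g.opMap n w s σ))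
    (h3 : ∀ s a, HEq (f.app s a) (g.app s a)) : f = g := by
  obtain ⟨s1, o1, a1, m1⟩ := f
  obtain ⟨s2, o2, a2, m2⟩ := g
  dsimp at h1 h2 h3
  subst h1
  have ho : o1 = o2 := by
    funext n w s σ; exact eq_of_heq (h2 n w s σ)
  subst ho
  have ha : a1 = a2 := by
    funext s a; exact eq_of_heq (h3 s a)
  subst ha
  rfl

lemma AlgHom.congr_sortMap {A B : Alg} {f g : AlgHom A B} (h : f = g) (s : A.sig.sorts) :
    f.sortMap s = g.sortMap s := by subst h; rfl

lemma AlgHom.congr_opMap {A B : Alg} {f g : AlgHom A B} (h : f = g) (n w s)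
    (σ : A.sig.ops n w s) : HEq (f.opMap n w s σ) (g.opMap n w s σ) := by subst h; rfl

lemma AlgHom.congr_app {A B : Alg} {f g : AlgHom A B} (h : f = g) (s) (a : A.carrier s) :
    HEq (f.app s a) (g.app s a) := by subst h; rfl

lemma AlgHom.hcongr_opMap {A B : Alg} (f : AlgHom A B) {n : ℕ}
    {w w' : Fin n → A.sig.sorts} {s s' : A.sig.sorts} (hw : w = w') (hs : s = s')
    {σ : A.sig.ops n w s} {σ' : A.sig.ops n w' s'} (hσ : HEq σ σ') :
    HEq (f.opMap n w s σ) (f.opMap n w' s' σ') := by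
  subst hw; subst hs; cases hσ; rfl

/-! ### Products -/

section Products

variable {ι : Type} (Af : ι → Alg)

def prodAlg : Alg where
  sig :=
    { sorts := ∀ j, (Af j).sig.sorts
      ops := fun n w s => ∀ j, (Af j).sig.ops n (fun i => w i j) (s j) }
  carrier := fun s => ∀ j, (Af j).carrier (s j)
  str := fun n w s σ a => fun j => (Af j).str n (fun i => w i j) (s j) (σ j) (fun i => a i j)

def prodProj (j : ι) : AlgHom (prodAlg Af) (Af j) where
  sortMap s := s j
  opMap _ _ _ σ := σ j
  app _ a := a j
  map_ops _ _ _ _ _ := rfl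

def prodLift {X : Alg} (l : ∀ j, AlgHom X (Af j)) : AlgHom X (prodAlg Af) where
  sortMap s := fun j => (l j).sortMap s
  opMap n w s σ := fun j => (l j).opMap n w s σ
  app s a := fun j => (l j).app s a
  map_ops n w s σ a := by
    funext j
    exact (l j).map_ops n w s σ a

def prodFan : Fan Af := Fan.mk (prodAlg Af) (fun j => prodProj Af j)

def prodIsLimit : IsLimit (prodFan Af) := by
  refine mkFanLimit _ (fun s => prodLift Af (fun j => s.proj j)) (fun s j => rfl) ?_
  intro s m h
  obtain ⟨mS, mO, mA, mM⟩ := m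
  have hS : mS = fun x => fun j => (s.proj j).sortMap x := by
    funext x j
    exact AlgHom.congr_sortMap (h j) x
  subst hS
  have hO : mO = fun n w x σ => fun j => (s.proj j).opMap n w x σ := by
    funext n w x σ j
    exact eq_of_heq (AlgHom.congr_opMap (h j) n w x σ)
  subst hO
  have hA : mA = fun x a => fun j => (s.proj j).app x a := by
    funext x a j
    exact eq_of_heq (AlgHom.congr_app (h j) x a)
  subst hA
  rfl

instance : HasProducts.{0} Alg :=
  hasProducts_of_limit_fans (fun f => prodFan f) (fun f => prodIsLimit f)

end Products


/-! ### Equalizers -/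

section Equalizers

variable {A B : Alg}

/-- Reinterpret an `AlgHom` as a morphism in the category `Alg`. -/
abbrev toHom (f : AlgHom A B) : A ⟶ B := f

variable (f g : AlgHom A B)

def eqAlg : Alg where
  sig :=
    { sorts := { s : A.sig.sorts // f.sortMap s = g.sortMap s }
      ops := fun n w s =>
        { σ : A.sig.ops n (fun i => (w i).1) s.1 //
            HEq (f.opMap n (fun i => (w i).1) s.1 σ) (g.opMap n (fun i => (w i).1) s.1 σ) } }
  carrier := fun s => { a : A.carrier s.1 // HEq (f.app s.1 a) (g.app s.1 a) }
  str := fun n w s σ a =>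
    ⟨A.str n (fun i => (w i).1) s.1 σ.1 (fun i => (a i).1), by
      rw [f.map_ops, g.map_ops]
      exact B.str_congr (funext fun i => (w i).2) s.2 σ.2 (fun i => (a i).2)⟩

def eqIncl : AlgHom (eqAlg f g) A where
  sortMap s := s.1
  opMap _ _ _ σ := σ.1
  app _ a := a.1
  map_ops _ _ _ _ _ := rfl

lemma eq_condition : toHom (eqIncl f g) ≫ toHom f = toHom (eqIncl f g) ≫ toHom g := by
  apply AlgHom.ext''
  · funext s; exact s.2
  · intro n w s σ; exact σ.2
  · intro s a; exact a.2

def eqFork : Fork (toHom f) (toHom g) := Fork.ofι (toHom (eqIncl f g)) (eq_condition f g)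

def eqLift (s : Fork (toHom f) (toHom g)) : s.pt ⟶ eqAlg f g where
  sortMap x := ⟨AlgHom.sortMap s.ι x, AlgHom.congr_sortMap s.condition x⟩
  opMap n w x σ := ⟨AlgHom.opMap s.ι n w x σ, AlgHom.congr_opMap s.condition n w x σ⟩
  app x a := ⟨AlgHom.app s.ι x a, AlgHom.congr_app s.condition x a⟩
  map_ops n w x σ a := by
    apply Subtype.ext
    exact AlgHom.map_ops s.ι n w x σ a

def eqIsLimit : IsLimit (eqFork f g) := by
  refine Fork.IsLimit.mk _ (fun s => eqLift f g s) (fun s => rfl) ?_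
  intro s m hm
  obtain ⟨mS, mO, mA, mM⟩ := m
  have hS : mS = fun x => (⟨AlgHom.sortMap s.ι x, AlgHom.congr_sortMap s.condition x⟩ :
      (eqAlg f g).sig.sorts) := by
    funext x; exact Subtype.ext (AlgHom.congr_sortMap hm x)
  subst hS
  have hO : mO = fun n w x σ => ⟨AlgHom.opMap s.ι n w x σ,
      AlgHom.congr_opMap s.condition n w x σ⟩ := by
    funext n w x σ
    exact Subtype.ext (eq_of_heq (AlgHom.congr_opMap hm n w x σ))
  subst hO
  have hA : mA = fun x a => ⟨AlgHom.app s.ι x a, AlgHom.congr_app s.condition x a⟩ := by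
    funext x a
    exact Subtype.ext (eq_of_heq (AlgHom.congr_app hm x a))
  subst hA
  rfl

instance : HasEqualizers Alg :=
  @hasEqualizers_of_hasLimit_parallelPair Alg _
    (fun {X Y u v} => HasLimit.mk ⟨eqFork u v, eqIsLimit u v⟩)

end Equalizers

instance : HasLimits Alg := has_limits_of_hasEqualizers_and_products


/-! ### Coproducts -/

section Coproducts

variable {ι : Type} (Af : ι → Alg)

/-- A lift of an operation of the coproduct signature to one of the components. -/
structure CopLift (n : ℕ) (w : Fin n → Σ i, (Af i).sig.sorts) (s : Σ i, (Af i).sig.sorts) :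
    Type where
  idx : ι
  w' : Fin n → (Af idx).sig.sorts
  s' : (Af idx).sig.sorts
  hw : ∀ k, w k = ⟨idx, w' k⟩
  hs : s = ⟨idx, s'⟩
  op : (Af idx).sig.ops n w' s'

def copCar (p : Σ i, (Af i).sig.sorts) : Type := (Af p.1).carrier p.2

def copCast {p q : Σ i, (Af i).sig.sorts} (h : p = q) (a : copCar Af p) : copCar Af q :=
  cast (congrArg (copCar Af) h) a

def coprodAlg : Alg where
  sig :=
    { sorts := Σ i, (Af i).sig.sorts
      ops := CopLift Af }
  carrier := copCar Af
  str := fun n w s L a =>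
    copCast Af L.hs.symm
      ((Af L.idx).str n L.w' L.s' L.op (fun k => copCast Af (L.hw k) (a k)))

def copInj (i : ι) : AlgHom (Af i) (coprodAlg Af) where
  sortMap s := ⟨i, s⟩
  opMap n w s σ := ⟨i, w, s, fun _ => rfl, rfl, σ⟩
  app _ a := a
  map_ops _ _ _ _ _ := rfl

variable {Af} in
def copDesc {C : Alg} (l : ∀ i, AlgHom (Af i) C) : AlgHom (coprodAlg Af) C where
  sortMap p := (l p.1).sortMap p.2
  opMap n w s L :=
    have h1 : ((l L.idx).sortMap ∘ L.w')
        = ((fun (p : Σ i, (Af i).sig.sorts) => (l p.1).sortMap p.2) ∘ w) :=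
      (funext fun k => by
        show (l (w k).1).sortMap (w k).2 = (l L.idx).sortMap (L.w' k)
        rw [L.hw k]).symm
    have h2 : (l L.idx).sortMap L.s'
        = (fun (p : Σ i, (Af i).sig.sorts) => (l p.1).sortMap p.2) s :=
      (congrArg (fun (p : Σ i, (Af i).sig.sorts) => (l p.1).sortMap p.2) L.hs).symm
    cast (congr (congrArg (C.sig.ops n) h1) h2) ((l L.idx).opMap n L.w' L.s' L.op)
  app p a := (l p.1).app p.2 a
  map_ops n w s L a := by
    obtain ⟨i, w', s', hw, hs, σ⟩ := L
    have hwe : w = fun k => ⟨i, w' k⟩ := funext hw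
    subst hwe; subst hs
    exact (l i).map_ops n w' s' σ a

def copCofan : Cofan Af := Cofan.mk (coprodAlg Af) (fun i => copInj Af i)

def copIsColimit : IsColimit (copCofan Af) := by
  refine mkCofanColimit _ (fun t => copDesc (fun i => t.inj i)) (fun t i => rfl) ?_
  intro t m h
  obtain ⟨mS, mO, mA, mM⟩ := m
  have hS : mS = fun (p : Σ i, (Af i).sig.sorts) => AlgHom.sortMap (t.inj p.1) p.2 := by
    funext p
    obtain ⟨i, s⟩ := p
    exact AlgHom.congr_sortMap (h i) s
  subst hS
  have hO : mO = fun n w s L => AlgHom.opMap (copDesc (fun i => t.inj i)) n w s L := by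
    funext n w s L
    obtain ⟨i, w', s', hw, hs, σ⟩ := L
    have hwe : w = fun k => ⟨i, w' k⟩ := funext hw
    subst hwe; subst hs
    exact eq_of_heq (AlgHom.congr_opMap (h i) n w' s' σ)
  subst hO
  have hA : mA = fun (p : Σ i, (Af i).sig.sorts) a => AlgHom.app (t.inj p.1) p.2 a := by
    funext p a
    obtain ⟨i, s⟩ := p
    exact eq_of_heq (AlgHom.congr_app (h i) s a)
  subst hA
  rfl

instance : HasCoproducts.{0} Alg := fun J =>
  { has_colimit := fun F =>
      HasColimit.mk
        ⟨(Cocone.precompose Discrete.natIsoFunctor.hom).obj (copCofan fun j => F.obj ⟨j⟩),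
          (IsColimit.precomposeHomEquiv _ _).symm (copIsColimit _)⟩ }

end Coproducts


/-! ### Coequalizers -/

section Coequalizers
noncomputable section

variable {A B : Alg} (f g : AlgHom A B)

/-- The relation on sorts coequalized. -/
def SRel : B.sig.sorts → B.sig.sorts → Prop := fun x y =>
  ∃ s, f.sortMap s = x ∧ g.sortMap s = y

def QS : Type := Quot (SRel f g)

def qmk (s : B.sig.sorts) : QS f g := Quot.mk _ s

/-- A lift of an operation of the coequalizer signature. -/
structure CoqLift (n : ℕ) (w : Fin n → QS f g) (s : QS f g) : Type where
  w' : Fin n → B.sig.sorts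
  s' : B.sig.sorts
  hw : ∀ k, qmk f g (w' k) = w k
  hs : qmk f g s' = s
  op : B.sig.ops n w' s'

def ORel0 (n : ℕ) (w₁ : Fin n → B.sig.sorts) (s₁ : B.sig.sorts) (op₁ : B.sig.ops n w₁ s₁)
    (w₂ : Fin n → B.sig.sorts) (s₂ : B.sig.sorts) (op₂ : B.sig.ops n w₂ s₂) : Prop :=
  ∃ (w0 : Fin n → A.sig.sorts) (s0 : A.sig.sorts) (σ : A.sig.ops n w0 s0),
    w₁ = f.sortMap ∘ w0 ∧ s₁ = f.sortMap s0 ∧ HEq op₁ (f.opMap n w0 s0 σ) ∧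
    w₂ = g.sortMap ∘ w0 ∧ s₂ = g.sortMap s0 ∧ HEq op₂ (g.opMap n w0 s0 σ)

def ORel (n : ℕ) (w : Fin n → QS f g) (s : QS f g) :
    CoqLift f g n w s → CoqLift f g n w s → Prop := fun L₁ L₂ =>
  ORel0 f g n L₁.w' L₁.s' L₁.op L₂.w' L₂.s' L₂.op

def QOps (n : ℕ) (w : Fin n → QS f g) (s : QS f g) : Type := Quot (ORel f g n w s)

/-- Terms over the coequalizer signature with the carrier of `B` as generators. -/
inductive CTerm : QS f g → Type
  | gen (s' : B.sig.sorts) (b : B.carrier s') : CTerm (qmk f g s')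
  | node {n : ℕ} {w : Fin n → QS f g} {s : QS f g}
      (σ : QOps f g n w s) (ts : ∀ k, CTerm (w k)) : CTerm s

/-- The congruence on terms. -/
inductive CRel : ∀ s, CTerm f g s → CTerm f g s → Prop
  | refl (s) (t : CTerm f g s) : CRel s t t
  | symm {s t u} : CRel s t u → CRel s u t
  | trans {s t u v} : CRel s t u → CRel s u v → CRel s t v
  | glue (s0 : A.sig.sorts) (a : A.carrier s0) :
      CRel (qmk f g (g.sortMap s0))
        (cast (congrArg (CTerm f g) (Quot.sound ⟨s0, rfl, rfl⟩))
          (CTerm.gen (f.sortMap s0) (f.app s0 a)))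
        (CTerm.gen (g.sortMap s0) (g.app s0 a))
  | strNode {n : ℕ} (w' : Fin n → B.sig.sorts) (s' : B.sig.sorts) (σ : B.sig.ops n w' s')
      (b : ∀ k, B.carrier (w' k)) :
      CRel (qmk f g s')
        (CTerm.node (Quot.mk _ ⟨w', s', fun _ => rfl, rfl, σ⟩)
          (fun k => CTerm.gen (w' k) (b k)))
        (CTerm.gen s' (B.str n w' s' σ b))
  | nodeCongr {n : ℕ} {w : Fin n → QS f g} {s : QS f g} (σ : QOps f g n w s)
      {ts us : ∀ k, CTerm f g (w k)} (h : ∀ k, CRel (w k) (ts k) (us k)) :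
      CRel s (CTerm.node σ ts) (CTerm.node σ us)

instance ctermSetoid (s : QS f g) : Setoid (CTerm f g s) :=
  ⟨CRel f g s, ⟨CRel.refl s, CRel.symm, CRel.trans⟩⟩

def QCar (s : QS f g) : Type := Quotient (ctermSetoid f g s)

def coeqAlg : Alg where
  sig := { sorts := QS f g, ops := QOps f g }
  carrier := QCar f g
  str := fun n w s σ a =>
    Quotient.mk _ (CTerm.node σ (fun k => Quotient.out (a k)))

lemma mk_node {n : ℕ} {w : Fin n → QS f g} {s : QS f g} (σ : QOps f g n w s)
    (ts : ∀ k, CTerm f g (w k)) :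
    (Quotient.mk _ (CTerm.node σ ts) : QCar f g s)
      = (coeqAlg f g).str n w s σ (fun k => Quotient.mk _ (ts k)) :=
  Quotient.sound (CRel.nodeCongr σ
    (fun k => Setoid.symm (Quotient.mk_out (ts k))))

def coeqπ : AlgHom B (coeqAlg f g) where
  sortMap := qmk f g
  opMap n w s σ := Quot.mk _ ⟨w, s, fun _ => rfl, rfl, σ⟩
  app s b := Quotient.mk _ (CTerm.gen s b)
  map_ops n w s σ b :=
    (Quotient.sound (Setoid.symm (CRel.strNode w s σ b))).trans (mk_node f g _ _)

lemma qops_heq {n : ℕ} {w₁ w₂ : Fin n → QS f g} {s₁ s₂ : QS f g} (hw : w₁ = w₂) (hs : s₁ = s₂)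
    (L₁ : CoqLift f g n w₁ s₁) (L₂ : CoqLift f g n w₂ s₂)
    (h : ORel0 f g n L₁.w' L₁.s' L₁.op L₂.w' L₂.s' L₂.op) :
    HEq (Quot.mk (ORel f g n w₁ s₁) L₁) (Quot.mk (ORel f g n w₂ s₂) L₂) := by
  subst hw; subst hs; exact heq_of_eq (Quot.sound h)

lemma qcar_heq {s₁ s₂ : QS f g} (h : s₁ = s₂) {t₁ : CTerm f g s₁} {t₂ : CTerm f g s₂}
    (hr : CRel f g s₂ (cast (congrArg (CTerm f g) h) t₁) t₂) :
    HEq (Quotient.mk _ t₁ : QCar f g s₁) (Quotient.mk _ t₂ : QCar f g s₂) := by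
  subst h; exact heq_of_eq (Quotient.sound hr)

lemma coeq_condition :
    toHom f ≫ toHom (coeqπ f g) = toHom g ≫ toHom (coeqπ f g) := by
  apply AlgHom.ext''
  · funext s; exact Quot.sound ⟨s, rfl, rfl⟩
  · intro n w s σ
    exact qops_heq f g (funext fun k => Quot.sound ⟨w k, rfl, rfl⟩) (Quot.sound ⟨s, rfl, rfl⟩)
      _ _ ⟨w, s, σ, rfl, rfl, HEq.rfl, rfl, rfl, HEq.rfl⟩
  · intro s a
    exact qcar_heq f g (Quot.sound ⟨s, rfl, rfl⟩) (CRel.glue s a)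

section Desc

variable {C : Alg} (h : AlgHom B C)
  (cond : toHom f ≫ toHom h = toHom g ≫ toHom h)

def descSort : QS f g → C.sig.sorts :=
  Quot.lift h.sortMap (fun x y hxy => by
    obtain ⟨s, hx, hy⟩ := hxy
    subst hx; subst hy
    exact AlgHom.congr_sortMap cond s)

def descOp (n : ℕ) (w : Fin n → QS f g) (s : QS f g) :
    QOps f g n w s → C.sig.ops n (descSort f g h cond ∘ w) (descSort f g h cond s) :=
  Quot.lift
    (fun L =>
      have h1 : (h.sortMap ∘ L.w') = (descSort f g h cond ∘ w) :=
        funext fun k => congrArg (descSort f g h cond) (L.hw k)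
      have h2 : h.sortMap L.s' = descSort f g h cond s :=
        congrArg (descSort f g h cond) L.hs
      cast (congr (congrArg (C.sig.ops n) h1) h2) (h.opMap n L.w' L.s' L.op))
    (fun L₁ L₂ hrel => by
      refine eq_of_heq (((cast_heq _ _).trans ?_).trans (cast_heq _ _).symm)
      obtain ⟨w0, s0, σ0, e1, e2, e3, e4, e5, e6⟩ := hrel
      exact ((h.hcongr_opMap e1 e2 e3).trans
        (AlgHom.congr_opMap cond n w0 s0 σ0)).trans (h.hcongr_opMap e4 e5 e6).symm)

lemma descOp_mk {n : ℕ} {w : Fin n → QS f g} {s : QS f g} (L : CoqLift f g n w s) :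
    HEq (descOp f g h cond n w s (Quot.mk _ L)) (h.opMap n L.w' L.s' L.op) :=
  cast_heq _ _

def evalT : ∀ (q : QS f g) (_ : CTerm f g q), C.carrier (descSort f g h cond q)
  | _, .gen s' b => h.app s' b
  | _, .node (n := n) (w := w) (s := s) σ ts =>
      C.str n (descSort f g h cond ∘ w) (descSort f g h cond s)
        (descOp f g h cond n w s σ) (fun k => evalT (w k) (ts k))

lemma evalT_cast {q q' : QS f g} (e : q = q') (t : CTerm f g q) :
    evalT f g h cond q' (cast (congrArg (CTerm f g) e) t)
      = cast (congrArg (fun r => C.carrier (descSort f g h cond r)) e)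
          (evalT f g h cond q t) := by
  subst e; rfl

lemma evalT_sound {q : QS f g} {t u : CTerm f g q} (hr : CRel f g q t u) :
    evalT f g h cond q t = evalT f g h cond q u := by
  induction hr with
  | refl s t => rfl
  | symm _ ih => exact ih.symm
  | trans _ _ ih1 ih2 => exact ih1.trans ih2
  | glue s0 a =>
      refine (evalT_cast f g h cond (Quot.sound ⟨s0, rfl, rfl⟩) _).trans ?_
      exact eq_of_heq ((cast_heq _ _).trans (AlgHom.congr_app cond s0 a))
  | strNode w' s' σ b =>
      exact (h.map_ops _ w' s' σ b).symm
  | nodeCongr σ _ ih =>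
      simp only [evalT]
      exact congrArg _ (funext fun k => ih k)

def descHom : AlgHom (coeqAlg f g) C where
  sortMap := descSort f g h cond
  opMap := descOp f g h cond
  app q := Quotient.lift (evalT f g h cond q) (fun _ _ hr => evalT_sound f g h cond hr)
  map_ops n w s σ a := by
    show C.str n _ _ (descOp f g h cond n w s σ)
        (fun k => evalT f g h cond (w k) (Quotient.out (a k)))
      = C.str n _ _ (descOp f g h cond n w s σ) _
    refine congrArg _ (funext fun k => ?_)
    conv_rhs => rw [← Quotient.out_eq (a k)]
    rfl

end Desc

def coeqCofork : Cofork (toHom f) (toHom g) :=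
  Cofork.ofπ (toHom (coeqπ f g)) (coeq_condition f g)

def coeqIsColimit : IsColimit (coeqCofork f g) := by
  refine Cofork.IsColimit.mk _
    (fun s => toHom (descHom f g (Cofork.π s) s.condition)) (fun s => rfl) ?_
  intro s m hm
  obtain ⟨mS, mO, mA, mM⟩ := m
  have hS : mS = descSort f g (Cofork.π s) s.condition := by
    funext q
    induction q using Quot.ind with
    | _ b => exact AlgHom.congr_sortMap hm b
  subst hS
  have hO : mO = descOp f g (Cofork.π s) s.condition := by
    funext n w s' σ
    induction σ using Quot.ind with
    | _ L =>
      obtain ⟨w', s'', hw, hs, op⟩ := L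
      have hwe : (fun k => qmk f g (w' k)) = w := funext hw
      subst hwe; subst hs
      refine eq_of_heq (HEq.trans ?_ (descOp_mk f g (Cofork.π s) s.condition _).symm)
      exact AlgHom.congr_opMap hm n w' s'' op
  subst hO
  have hA : mA = fun q => Quotient.lift (evalT f g (Cofork.π s) s.condition q)
      (fun _ _ hr => evalT_sound f g (Cofork.π s) s.condition hr) := by
    funext q t
    induction t using Quotient.ind with
    | _ t =>
      induction t with
      | gen s' b => exact eq_of_heq (AlgHom.congr_app hm s' b)
      | node σ ts ih =>
        conv_lhs => rw [mk_node f g σ ts]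
        refine (mM _ _ _ σ (fun k => Quotient.mk _ (ts k))).trans ?_
        exact congrArg _ (funext fun k => ih k)
  subst hA
  rfl

instance : HasCoequalizers Alg :=
  @hasCoequalizers_of_hasColimit_parallelPair Alg _
    (fun {X Y u v} => HasColimit.mk ⟨coeqCofork u v, coeqIsColimit u v⟩)

end
end Coequalizers

instance : HasColimits Alg := has_colimits_of_hasCoequalizers_and_coproducts

/-- The category `Alg` of many-sorted algebras is complete and cocomplete. -/
theorem alg_complete_and_cocomplete : HasLimits Alg ∧ HasColimits Alg :=
  ⟨inferInstance, inferInstance⟩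

end Stmt3
end

section
/- Let MSet ×_Set Sig be the category whose objects are triples (S, Σ, X) with (S, Σ) a many-sorted signature and X an S-sorted set, and whose morphisms (S, Σ, X) → (T, Λ, Y) are triples (φ, d, f) such that (φ, d) : (S, Σ) → (T, Λ) is a signature morphism and f : X → Y_φ is an S-sorted mapping. Then the forgetful functor G from the category Alg of many-sorted algebras to MSet ×_Set Sig — sending an algebra ((S, Σ), (A, F)) to (S, Σ, A) and a morphism ((φ, d), f) to (φ, d, f) — has a left adjoint (which on objects sends (S, Σ, X) to ((S, Σ), T_Σ(X)), the free Σ-algebra on X). -/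
open CategoryTheory

namespace Stmt4

/-- A many-sorted signature `(S, Σ)`, words on `S` being represented as functions `Fin n → S`. -/
structure Sig : Type 1 where
  sorts : Type
  ops : ∀ n : ℕ, (Fin n → sorts) → sorts → Type

/-- An object of the category `Alg`: a pair `((S, Σ), A)` with `(S, Σ)` a signature and `A`
a `Σ`-algebra. -/
structure Alg : Type 1 where
  sig : Sig
  carrier : sig.sorts → Type
  str : ∀ (n : ℕ) (w : Fin n → sig.sorts) (s : sig.sorts),
    sig.ops n w s → (∀ i : Fin n, carrier (w i)) → carrier s

/-- A morphism of `Alg`: a signature morphism `(φ, d)` together with a `Σ`-homomorphism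
`f : A → d^*(B)`. -/
structure AlgHom (A B : Alg) where
  sortMap : A.sig.sorts → B.sig.sorts
  opMap : ∀ (n : ℕ) (w : Fin n → A.sig.sorts) (s : A.sig.sorts),
    A.sig.ops n w s → B.sig.ops n (sortMap ∘ w) (sortMap s)
  app : ∀ s, A.carrier s → B.carrier (sortMap s)
  map_ops : ∀ (n : ℕ) (w : Fin n → A.sig.sorts) (s : A.sig.sorts)
      (σ : A.sig.ops n w s) (a : ∀ i, A.carrier (w i)),
    app s (A.str n w s σ a)
      = B.str n (sortMap ∘ w) (sortMap s) (opMap n w s σ) (fun i => app (w i) (a i))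

instance : Category Alg where
  Hom := AlgHom
  id A :=
    { sortMap := fun s => s
      opMap := fun _ _ _ σ => σ
      app := fun _ a => a
      map_ops := fun _ _ _ _ _ => rfl }
  comp f g :=
    { sortMap := fun s => g.sortMap (f.sortMap s)
      opMap := fun n w s σ => g.opMap n (f.sortMap ∘ w) (f.sortMap s) (f.opMap n w s σ)
      app := fun s a => g.app (f.sortMap s) (f.app s a)
      map_ops := fun n w s σ a => by
        simp only [f.map_ops, g.map_ops]
        try rfl }
  id_comp f := rfl
  comp_id f := rfl
  assoc f g h := rfl

/-- An object of the category `MSet ×_Set Sig`: a triple `(S, Σ, X)` with `(S, Σ)` a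
signature and `X` an `S`-sorted set. -/
structure MSetSig : Type 1 where
  sorts : Type
  ops : ∀ n : ℕ, (Fin n → sorts) → sorts → Type
  vars : sorts → Type

/-- A morphism of `MSet ×_Set Sig`: a triple `(φ, d, f)` with `(φ, d)` a signature morphism and
`f : X → Y_φ` an `S`-sorted mapping. -/
structure MSetSigHom (X Y : MSetSig) where
  sortMap : X.sorts → Y.sorts
  opMap : ∀ (n : ℕ) (w : Fin n → X.sorts) (s : X.sorts),
    X.ops n w s → Y.ops n (sortMap ∘ w) (sortMap s)
  app : ∀ s, X.vars s → Y.vars (sortMap s)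

instance : Category MSetSig where
  Hom := MSetSigHom
  id X :=
    { sortMap := fun s => s
      opMap := fun _ _ _ σ => σ
      app := fun _ a => a }
  comp f g :=
    { sortMap := fun s => g.sortMap (f.sortMap s)
      opMap := fun n w s σ => g.opMap n (f.sortMap ∘ w) (f.sortMap s) (f.opMap n w s σ)
      app := fun s a => g.app (f.sortMap s) (f.app s a) }
  id_comp f := rfl
  comp_id f := rfl
  assoc f g h := rfl

/-- The forgetful functor `G : Alg ⥤ MSet ×_Set Sig`. -/
def forget : Alg ⥤ MSetSig where
  obj A := ⟨A.sig.sorts, A.sig.ops, A.carrier⟩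
  map f := ⟨f.sortMap, f.opMap, f.app⟩
  map_id A := rfl
  map_comp f g := rfl

/-- Many-sorted terms over the signature and variables of `Z`. -/
inductive Tm (Z : MSetSig) : Z.sorts → Type
  | var {s : Z.sorts} : Z.vars s → Tm Z s
  | op {n : ℕ} (w : Fin n → Z.sorts) (s : Z.sorts) (σ : Z.ops n w s)
      (a : ∀ i : Fin n, Tm Z (w i)) : Tm Z s

/-- Functorial action of terms along `MSetSig` morphisms. -/
def Tm.map {Z W : MSetSig} (h : MSetSigHom Z W) : ∀ s, Tm Z s → Tm W (h.sortMap s)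
  | _, .var x => .var (h.app _ x)
  | _, .op w s σ a => .op (h.sortMap ∘ w) (h.sortMap s) (h.opMap _ w s σ)
      (fun i => Tm.map h (w i) (a i))

/-- The free algebra on `Z`. -/
def freeAlg (Z : MSetSig) : Alg where
  sig := ⟨Z.sorts, Z.ops⟩
  carrier := Tm Z
  str := fun _ w s σ a => Tm.op w s σ a

/-- The free algebra functor. -/
def freeFunctor : MSetSig ⥤ Alg where
  obj := freeAlg
  map {Z W} h :=
    { sortMap := h.sortMap
      opMap := h.opMap
      app := fun s t => Tm.map h s t
      map_ops := fun _ _ _ _ _ => rfl }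
  map_id Z := by
    have : ∀ s (t : Tm Z s), Tm.map (𝟙 Z) s t = t := by
      intro s t
      induction t with
      | var x => rfl
      | op w s σ a ih => exact congrArg (Tm.op w s σ) (funext ih)
    show AlgHom.mk _ _ _ _ = AlgHom.mk _ _ _ _
    simp only [funext fun s => funext (this s)]
    rfl
  map_comp {Z W V} f g := by
    have : ∀ s (t : Tm Z s), Tm.map (f ≫ g) s t = Tm.map g _ (Tm.map f s t) := by
      intro s t
      induction t with
      | var x => rfl
      | op w s σ a ih => exact congrArg (Tm.op _ _ _) (funext ih)
    show AlgHom.mk _ _ _ _ = AlgHom.mk _ _ _ _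
    simp only [funext fun s => funext (this s)]
    rfl

/-- Evaluation of terms in an algebra along a variable assignment. -/
def evalTm {Z : MSetSig} {B : Alg} (g : MSetSigHom Z (forget.obj B)) :
    ∀ s, Tm Z s → B.carrier (g.sortMap s)
  | _, .var x => g.app _ x
  | _, .op w s σ a => B.str _ (g.sortMap ∘ w) (g.sortMap s) (g.opMap _ w s σ)
      (fun i => evalTm g (w i) (a i))

theorem algHom_ext {A B : Alg} {sm : A.sig.sorts → B.sig.sorts}
    {om : ∀ n w s, A.sig.ops n w s → B.sig.ops n (sm ∘ w) (sm s)}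
    {app1 app2 : ∀ s, A.carrier s → B.carrier (sm s)} {h1 h2}
    (h : app1 = app2) :
    AlgHom.mk sm om app1 h1 = AlgHom.mk sm om app2 h2 := by cases h; rfl

/-- The forgetful functor from many-sorted algebras to the fibered product `MSet ×_Set Sig`
has a left adjoint (sending `(S, Σ, X)` to the free `Σ`-algebra `T_Σ(X)` on `X`). -/
theorem forget_hasLeftAdjoint : ∃ L : MSetSig ⥤ Alg, Nonempty (L ⊣ forget) := by
  refine ⟨freeFunctor, ⟨Adjunction.mkOfHomEquiv
    { homEquiv := fun Z B =>
        { toFun := fun F =>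
            { sortMap := F.sortMap
              opMap := F.opMap
              app := fun s x => F.app s (Tm.var x) }
          invFun := fun g =>
            { sortMap := g.sortMap
              opMap := g.opMap
              app := fun s t => evalTm g s t
              map_ops := fun _ _ _ _ _ => rfl }
          left_inv := ?_
          right_inv := ?_ }
      homEquiv_naturality_left_symm := ?_
      homEquiv_naturality_right := fun {Z B B'} F g => rfl }⟩⟩
  · intro F
    change AlgHom _ _ at F
    cases F with
    | mk sm om app h =>
      refine algHom_ext (funext fun s => funext fun t => ?_)
      induction t with
      | var x => rfl
      | op w s σ a ih =>
        exact (congrArg (B.str _ _ _ _) (funext ih)).trans (h _ w s σ a).symm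
  · intro g; rfl
  · intro Z' Z B f g
    have key : ∀ s (t : Tm Z' s), evalTm (f ≫ g) s t = evalTm g _ (Tm.map f s t) := by
      intro s t
      induction t with
      | var x => rfl
      | op w s σ a ih => exact congrArg _ (funext ih)
    exact algHom_ext (funext fun s => funext (key s))

end Stmt4
end

section
/- Let A be a set and J an algebraic closure operator on A, i.e., a mapping J : 𝒫(A) → 𝒫(A) that is extensive (X ⊆ J(X)), isotone (X ⊆ Y implies J(X) ⊆ J(Y)) and idempotent (J(J(X)) = J(X)), and that moreover satisfies J(X) = ⋃ { J(F) : F ⊆ X, F finite } for every X ⊆ A. Then there exist an index set I, arities n : I → ℕ and finitary operations f_i : A^{n_i} → A (i ∈ I) such that for every X ⊆ A, J(X) equals the least subset of A that contains X and is closed under every operation f_i. -/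
/-- **Birkhoff–Frink representation theorem.** Every algebraic closure operator `J` on a set `A`
is the operator of generated subalgebras for a suitable family of finitary operations on `A`. -/
theorem birkhoff_frink_representation {A : Type} (J : Set A → Set A)
    (hext : ∀ X, X ⊆ J X)
    (hiso : ∀ X Y, X ⊆ Y → J X ⊆ J Y)
    (hidem : ∀ X, J (J X) = J X)
    (halg : ∀ X, J X = ⋃ F ∈ {F : Set A | F ⊆ X ∧ F.Finite}, J F) :
    ∃ (I : Type) (n : I → ℕ) (f : ∀ i, (Fin (n i) → A) → A),
      ∀ X : Set A,
        J X =
          ⋂₀ {Y : Set A | X ⊆ Y ∧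
            ∀ (i : I) (a : Fin (n i) → A), (∀ k, a k ∈ Y) → f i a ∈ Y} := by
  classical
  refine ⟨Σ m : ℕ, {p : (Fin m → A) × A // p.2 ∈ J (Set.range p.1)},
    fun i => i.1,
    fun i x => if x = i.2.1.1 then i.2.1.2 else
      if h : 0 < i.1 then x ⟨0, h⟩ else i.2.1.2, ?_⟩
  intro X
  apply Set.Subset.antisymm
  · intro b hb
    intro Y hY
    obtain ⟨hXY, hcl⟩ := hY
    rw [halg X] at hb
    simp only [Set.mem_iUnion] at hb
    obtain ⟨F, ⟨hFX, hFfin⟩, hbF⟩ := hb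
    obtain ⟨m, a, -, rfl⟩ := hFfin.fin_param
    have := hcl ⟨m, ⟨(a, b), hbF⟩⟩ a (fun k => hXY (hFX ⟨k, rfl⟩))
    simpa using this
  · intro b hb
    refine hb (J X) ⟨hext X, ?_⟩
    rintro ⟨m, ⟨⟨a, c⟩, hc⟩⟩ x hx
    by_cases hxa : x = a
    · simp only [hxa, if_pos rfl]
      exact hidem X ▸ hiso _ _ (Set.range_subset_iff.mpr (hxa ▸ hx)) hc
    · simp only [if_neg hxa]
      by_cases hm : 0 < m
      · simpa [hm] using hx ⟨0, hm⟩
      · exact absurd (funext fun k => (Nat.not_lt_zero _ (lt_of_lt_of_le k.2 (Nat.not_lt.mp hm))).elim) hxa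
end

section
/- A complete lattice L is algebraic — i.e., every element of L is the supremum of a set of compact elements of L — if and only if there exist a set A, an index set I, arities n : I → ℕ and finitary operations f_i : A^{n_i} → A (i ∈ I) such that L is order-isomorphic to the set of all subsets of A closed under every operation f_i, ordered by inclusion. -/
open CompleteLattice

section ClosureAux

variable {A I : Type} (n : I → ℕ) (f : ∀ i, (Fin (n i) → A) → A)

/-- Closedness under the operations. -/
def OpClosed (Y : Set A) : Prop :=
  ∀ (i : I) (a : Fin (n i) → A), (∀ k, a k ∈ Y) → f i a ∈ Y

/-- Closure of a set under the operations. -/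
def opCl (X : Set A) : Set A :=
  {x | ∀ Z : Set A, OpClosed n f Z → X ⊆ Z → x ∈ Z}

theorem subset_opCl (X : Set A) : X ⊆ opCl n f X :=
  fun _ hx _ _ hXZ => hXZ hx

theorem opCl_min {X Z : Set A} (hZ : OpClosed n f Z) (hXZ : X ⊆ Z) :
    opCl n f X ⊆ Z := fun _ hx => hx Z hZ hXZ

theorem opClosed_opCl (X : Set A) : OpClosed n f (opCl n f X) := by
  intro i a ha Z hZ hXZ
  exact hZ i a fun k => ha k Z hZ hXZ

theorem opCl_mono {X Y : Set A} (h : X ⊆ Y) : opCl n f X ⊆ opCl n f Y :=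
  opCl_min n f (opClosed_opCl n f Y) (h.trans (subset_opCl n f Y))

/-- Finitary character of the closure operator. -/
theorem opCl_finitary {U : Set A} {x : A} (hx : x ∈ opCl n f U) :
    ∃ G : Finset A, ↑G ⊆ U ∧ x ∈ opCl n f ↑G := by
  classical
  refine hx {y | ∃ G : Finset A, ↑G ⊆ U ∧ y ∈ opCl n f ↑G} ?_ ?_
  · intro i a ha
    choose g hg1 hg2 using ha
    refine ⟨Finset.univ.biUnion g, ?_, ?_⟩
    · intro z hz
      rcases Finset.mem_biUnion.1 hz with ⟨k, -, hk⟩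
      exact hg1 k hk
    · refine opClosed_opCl n f _ i a fun k => ?_
      refine opCl_mono n f ?_ (hg2 k)
      intro z hz
      exact Finset.mem_biUnion.2 ⟨k, Finset.mem_univ k, hz⟩
  · intro y hy
    exact ⟨{y}, by simpa using hy, subset_opCl n f _ (by simp)⟩

end ClosureAux

/-- A complete lattice is algebraic (every element is a supremum of compact elements) iff it is
order-isomorphic to the lattice of subsets of some set `A` closed under a given family of
finitary operations, ordered by inclusion. -/
theorem algebraic_lattice_iff_lattice_of_closed_sets {L : Type} [CompleteLattice L] :
    (∀ x : L, ∃ s : Set L, (∀ k ∈ s, IsCompactElement k) ∧ x = sSup s) ↔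
      ∃ (A : Type) (I : Type) (n : I → ℕ) (f : ∀ i, (Fin (n i) → A) → A),
        Nonempty
          (L ≃o {Y : Set A // ∀ (i : I) (a : Fin (n i) → A), (∀ k, a k ∈ Y) → f i a ∈ Y}) := by
  classical
  constructor
  · -- forward direction
    intro halg
    set A := {k : L // IsCompactElement k} with hA
    set I := {p : Σ m : ℕ, (Fin m → A) × A // (p.2.2 : L) ≤ ⨆ j, (p.2.1 j : L)} with hI
    set n : I → ℕ := fun i => i.1.1 with hn
    set f : ∀ i : I, (Fin (n i) → A) → A := fun i b =>
      if b = i.1.2.1 then i.1.2.2 else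
        (if h : 0 < n i then b ⟨0, h⟩ else i.1.2.2) with hf
    refine ⟨A, I, n, f, ⟨?_⟩⟩
    -- the closed-sets condition for φ x
    have keyclosed : ∀ x : L,
        ∀ (i : I) (a : Fin (n i) → A), (∀ k, a k ∈ {k : A | (k : L) ≤ x}) →
          f i a ∈ {k : A | (k : L) ≤ x} := by
      intro x i a ha
      by_cases hb : a = i.1.2.1
      · have : f i a = i.1.2.2 := if_pos hb
        rw [this]
        refine i.2.trans (iSup_le fun j => ?_)
        rw [← hb]
        exact ha j
      · by_cases h0 : 0 < n i
        · have : f i a = a ⟨0, h0⟩ := by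
            rw [hf]; simp only [hb, if_false]; rw [dif_pos h0]
          rw [this]; exact ha _
        · exact absurd (funext fun j => absurd j.2 (by omega)) hb
    -- closed sets coming from compact elements below x
    set φ : L → {Y : Set A // ∀ (i : I) (a : Fin (n i) → A), (∀ k, a k ∈ Y) → f i a ∈ Y} :=
      fun x => ⟨{k : A | (k : L) ≤ x}, keyclosed x⟩ with hφ
    set ψ : {Y : Set A // ∀ (i : I) (a : Fin (n i) → A), (∀ k, a k ∈ Y) → f i a ∈ Y} → L :=
      fun Y => sSup (Subtype.val '' Y.1) with hψ
    have hψφ : ∀ x, ψ (φ x) = x := by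
      intro x
      refine le_antisymm (sSup_le ?_) ?_
      · rintro y ⟨k, hk, rfl⟩
        exact hk
      · obtain ⟨s, hs, hx⟩ := halg x
        rw [hx]
        refine sSup_le fun y hy => ?_
        exact le_sSup ⟨⟨y, hs y hy⟩, le_sSup hy, rfl⟩
    have hφψ : ∀ Y, φ (ψ Y) = Y := by
      intro Y
      apply Subtype.ext
      ext k
      constructor
      · intro hk
        -- k compact, k ≤ sSup (val '' Y)
        obtain ⟨t, ht, hkt⟩ := (CompleteLattice.isCompactElement_iff_exists_le_sSup_of_le_sSup L _).1 k.2 (Subtype.val '' Y.1) hk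
        -- choose preimages
        have hch : ∀ z ∈ t, ∃ w : A, w ∈ Y.1 ∧ (w : L) = z := by
          intro z hz
          rcases ht hz with ⟨w, hw, rfl⟩
          exact ⟨w, hw, rfl⟩
        choose w hw1 hw2 using hch
        set lst := t.attach.toList with hlst
        set a : Fin lst.length → A := fun j => w (lst.get j).1 (lst.get j).2 with ha
        have hle : (k : L) ≤ ⨆ j, (a j : L) := by
          refine hkt.trans (Finset.sup_le fun z hz => ?_)
          have hmem : (⟨z, hz⟩ : {x // x ∈ t}) ∈ lst := by simp [hlst]
          obtain ⟨j, hj⟩ := List.mem_iff_get.1 hmem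
          have hzj : (a j : L) = z := by
            show (w (lst.get j).1 (lst.get j).2 : L) = z
            rw [hw2, hj]
          rw [id, ← hzj]
          exact le_iSup (fun j => (a j : L)) j
        have := Y.2 ⟨⟨lst.length, a, k⟩, hle⟩ a (fun j => hw1 _ _)
        have hfa : f ⟨⟨lst.length, a, k⟩, hle⟩ a = k := if_pos rfl
        rwa [hfa] at this
      · intro hk
        exact le_sSup ⟨k, hk, rfl⟩
    refine ⟨⟨φ, ψ, fun x => hψφ x, fun Y => hφψ Y⟩, ?_⟩
    · intro x y
      constructor
      · intro h
        have h' : (φ x).1 ⊆ (φ y).1 := h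
        calc x = ψ (φ x) := (hψφ x).symm
          _ ≤ ψ (φ y) := sSup_le_sSup (Set.image_mono (f := Subtype.val) h')
          _ = y := hψφ y
      · intro h k hk
        exact le_trans hk h
  · -- reverse direction
    rintro ⟨A, I, n, f, ⟨e⟩⟩
    intro x
    set S := {Y : Set A // ∀ (i : I) (a : Fin (n i) → A), (∀ k, a k ∈ Y) → f i a ∈ Y} with hS
    have hSclosed : ∀ Y : S, OpClosed n f Y.1 := fun Y => Y.2
    have hClS : ∀ X : Set A, OpClosed n f (opCl n f X) := opClosed_opCl n f
    -- e Y ≤ e Z iff Y ≤ Z, and subtype le is set inclusion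
    have hle : ∀ Y Z : S, Y ≤ Z ↔ Y.1 ⊆ Z.1 := fun Y Z => Iff.rfl
    -- the closure as an element of S
    set clS : Set A → S := fun X => ⟨opCl n f X, hClS X⟩ with hclS
    -- compactness of e.symm (clS F) for F finite
    have hcompact : ∀ F : Finset A, IsCompactElement (e.symm (clS ↑F)) := by
      intro F
      refine (CompleteLattice.isCompactElement_iff_exists_le_sSup_of_le_sSup L _).2 ?_
      intro s hs
      have h1 : clS ↑F ≤ e (sSup s) := by
        have := e.symm.le_iff_le.2 (le_refl (e (sSup s)))
        calc clS ↑F = e (e.symm (clS ↑F)) := (e.apply_symm_apply _).symm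
          _ ≤ e (sSup s) := e.le_iff_le.2 hs
      set U : Set A := ⋃ y ∈ s, (e y).1 with hU
      have h2 : e (sSup s) ≤ clS U := by
        have : sSup s ≤ e.symm (clS U) := by
          refine sSup_le fun y hy => ?_
          have : e y ≤ clS U := by
            refine (hle _ _).2 ((Set.subset_iUnion₂ y hy).trans (subset_opCl n f U))
          calc y = e.symm (e y) := (e.symm_apply_apply y).symm
            _ ≤ e.symm (clS U) := e.symm.le_iff_le.2 this
        calc e (sSup s) ≤ e (e.symm (clS U)) := e.le_iff_le.2 this
          _ = clS U := e.apply_symm_apply _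
      have hFU : (↑F : Set A) ⊆ opCl n f U := by
        intro z hz
        exact ((hle _ _).1 (h1.trans h2)) (subset_opCl n f _ hz)
      -- choose finite witnesses
      have hch : ∀ z ∈ F, ∃ G : Finset A, ↑G ⊆ U ∧ z ∈ opCl n f ↑G :=
        fun z hz => opCl_finitary n f (hFU hz)
      choose g hg1 hg2 using hch
      set G : Finset A := F.attach.biUnion (fun z => g z.1 z.2) with hG
      have hGU : ↑G ⊆ U := by
        intro z hz
        rw [hG] at hz
        rcases Finset.mem_biUnion.1 (by exact_mod_cast hz) with ⟨w, -, hw⟩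
        exact hg1 w.1 w.2 hw
      -- choose elements of s covering G
      have hch2 : ∀ z ∈ G, ∃ y, y ∈ s ∧ z ∈ (e y).1 := by
        intro z hz
        rcases Set.mem_iUnion₂.1 (hGU hz) with ⟨y, hy, hzy⟩
        exact ⟨y, hy, hzy⟩
      choose yf hyf1 hyf2 using hch2
      set t : Finset L := G.attach.image (fun z => yf z.1 z.2) with ht
      refine ⟨t, ?_, ?_⟩
      · intro y hy
        rcases Finset.mem_image.1 hy with ⟨z, -, rfl⟩
        exact hyf1 _ _
      · -- e.symm (clS F) ≤ t.sup id
        have hGsub : (↑G : Set A) ⊆ (e (t.sup id)).1 := by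
          intro z hz
          have hyt : yf z hz ≤ t.sup id := by
            refine Finset.le_sup (f := id) ?_
            exact Finset.mem_image.2 ⟨⟨z, hz⟩, Finset.mem_attach _ _, rfl⟩
          exact (hle _ _).1 (e.le_iff_le.2 hyt) (hyf2 z hz)
        have hFG : (↑F : Set A) ⊆ opCl n f ↑G := by
          intro z hz
          refine opCl_mono n f ?_ (hg2 z hz)
          intro w hw
          exact Finset.mem_coe.2 (Finset.mem_biUnion.2 ⟨⟨z, hz⟩, Finset.mem_attach _ _, hw⟩)
        have : clS ↑F ≤ e (t.sup id) := by
          refine (hle _ _).2 ?_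
          refine opCl_min n f (hSclosed _) ?_
          intro z hz
          exact opCl_min n f (hSclosed _) hGsub (hFG hz)
        calc e.symm (clS ↑F) ≤ e.symm (e (t.sup id)) := e.symm.le_iff_le.2 this
          _ = t.sup id := e.symm_apply_apply _
    -- now show x is the sup of such compacts
    set s0 : Set L := {y : L | ∃ F : Finset A, ↑F ⊆ (e x).1 ∧ y = e.symm (clS ↑F)} with hs0
    refine ⟨s0, ?_, ?_⟩
    · rintro k ⟨F, -, rfl⟩
      exact hcompact F
    · refine le_antisymm ?_ (sSup_le ?_)
      · have hx : e x ≤ e (sSup s0) := by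
          refine (hle _ _).2 fun a ha => ?_
          have hmem : e.symm (clS ↑({a} : Finset A)) ∈ s0 := ⟨{a}, by simpa using ha, rfl⟩
          have h1 : e.symm (clS ↑({a} : Finset A)) ≤ sSup s0 := le_sSup hmem
          have h2 : clS ↑({a} : Finset A) ≤ e (sSup s0) := by
            calc clS ↑({a} : Finset A) = e (e.symm (clS ↑({a} : Finset A))) :=
                (e.apply_symm_apply _).symm
              _ ≤ _ := e.le_iff_le.2 h1
          exact (hle _ _).1 h2 (subset_opCl n f _ (by simp))
        calc x = e.symm (e x) := (e.symm_apply_apply x).symm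
          _ ≤ e.symm (e (sSup s0)) := e.symm.le_iff_le.2 hx
          _ = sSup s0 := e.symm_apply_apply _
      · rintro y ⟨F, hF, rfl⟩
        have : clS ↑F ≤ e x := (hle _ _).2 (opCl_min n f (hSclosed _) hF)
        calc e.symm (clS ↑F) ≤ e.symm (e x) := e.symm.le_iff_le.2 this
          _ = x := e.symm_apply_apply x
end

section
/- Let φ : S → T be a mapping, A and A' S-sorted sets, and 𝒞, 𝒞' S-closure systems on A and A' respectively. Then ∐_φ[𝒞] := { ∐_φ C : C ∈ 𝒞 } is a T-closure system on ∐_φ A; and if an S-sorted mapping f : A → A' is continuous from (A, 𝒞) to (A', 𝒞'), then ∐_φ f is continuous from (∐_φ A, ∐_φ[𝒞]) to (∐_φ A', ∐_φ[𝒞']). -/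
universe u

namespace Stmt12

/-- `𝒞` is a closure system on a sorted set: it contains the total sorted subset and is closed
under (componentwise) intersections of nonempty subfamilies. -/
def IsClSy {S : Type u} {A : S → Type u} (𝒞 : Set (∀ s, Set (A s))) : Prop :=
  (fun _ => Set.univ) ∈ 𝒞 ∧
    ∀ 𝒟 : Set (∀ s, Set (A s)), 𝒟 ⊆ 𝒞 → 𝒟.Nonempty → sInf 𝒟 ∈ 𝒞

variable {S T : Type u} (φ : S → T)

/-- The `T`-sorted set `∐_φ A` induced by an `S`-sorted set `A`: its `t`-component is the
disjoint union `∐_{s ∈ φ⁻¹(t)} A_s` (elements being pairs `(a, s)` with `φ s = t`). -/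
def Cop (A : S → Type u) : T → Type u := fun t => Σ s : {s : S // φ s = t}, A s.val

/-- The `T`-sorted subset `∐_φ X` of `∐_φ A` induced by an `S`-sorted subset `X` of `A`. -/
def copSet {A : S → Type u} (X : ∀ s, Set (A s)) : ∀ t, Set (Cop φ A t) :=
  fun _ => {p | p.2 ∈ X p.1.val}

/-- The `T`-sorted mapping `∐_φ f` induced by an `S`-sorted mapping `f`. -/
def copMap {A A' : S → Type u} (f : ∀ s, A s → A' s) : ∀ t, Cop φ A t → Cop φ A' t :=
  fun _ p => ⟨p.1, f p.1.val p.2⟩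

/-- `∐_φ` of an `S`-closure system is a `T`-closure system, and `∐_φ` preserves continuity of
sorted mappings. -/
theorem coprod_clSy_and_continuous (A A' : S → Type u)
    (𝒞 : Set (∀ s, Set (A s))) (h𝒞 : IsClSy 𝒞)
    (𝒞' : Set (∀ s, Set (A' s))) (h𝒞' : IsClSy 𝒞') :
    IsClSy ((copSet φ (A := A)) '' 𝒞) ∧
      ∀ f : ∀ s, A s → A' s,
        (∀ Y ∈ 𝒞', (fun s => f s ⁻¹' Y s) ∈ 𝒞) →
          ∀ Y ∈ (copSet φ (A := A')) '' 𝒞',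
            (fun t => copMap φ f t ⁻¹' Y t) ∈ (copSet φ (A := A)) '' 𝒞 := by
  have memInf : ∀ {I : Type u} (B : I → Type u) (𝒟 : Set (∀ t, Set (B t))) (t : I) (p : B t),
      p ∈ sInf 𝒟 t ↔ ∀ D ∈ 𝒟, p ∈ D t := by
    intro I B 𝒟 t p
    simp [sInf_apply, Set.iInf_eq_iInter, Set.mem_iInter]
  constructor
  · constructor
    · exact ⟨fun _ => Set.univ, h𝒞.1, rfl⟩
    · intro 𝒟 h𝒟sub ⟨D0, hD0⟩
      set 𝒟₀ : Set (∀ s, Set (A s)) := {X | X ∈ 𝒞 ∧ copSet φ X ∈ 𝒟} with h𝒟₀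
      obtain ⟨X0, hX0, hX0eq⟩ := h𝒟sub hD0
      refine ⟨sInf 𝒟₀, h𝒞.2 𝒟₀ (fun X hX => hX.1) ⟨X0, hX0, hX0eq ▸ hD0⟩, ?_⟩
      funext t
      ext p
      show p.2 ∈ sInf 𝒟₀ p.1.val ↔ _
      rw [memInf A 𝒟₀ p.1.val p.2, memInf (Cop φ A) 𝒟 t p]
      constructor
      · intro h D hD
        obtain ⟨X, hX, rfl⟩ := h𝒟sub hD
        exact h X ⟨hX, hD⟩
      · intro h X hX
        exact h (copSet φ X) hX.2
  · intro f hf Y hY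
    obtain ⟨X, hX, rfl⟩ := hY
    exact ⟨fun s => f s ⁻¹' X s, hf X hX, rfl⟩

end Stmt12
end

section
/- Let φ : S → T be a mapping, 𝒞 an S-closure system on an S-sorted set A, and 𝒟 a T-closure system on a T-sorted set B. For an S-sorted mapping f : A → B_φ, let f^♯ : ∐_φ A → B be the T-sorted mapping given by f^♯_t(a, s) = f_s(a) for s ∈ φ⁻¹(t) and a ∈ A_s. Then f is continuous from (A, 𝒞) to (B_φ, Δ_φ[𝒟]) if and only if f^♯ is continuous from (∐_φ A, ∐_φ[𝒞]) to (B, 𝒟); hence the hom-set bijection of the adjunction ∐_φ ⊣ Δ_φ restricts to a bijection between the respective sets of continuous mappings. -/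
universe u

namespace Stmt13

/-- `𝒞` is a closure system on a sorted set: it contains the total sorted subset and is closed
under (componentwise) intersections of nonempty subfamilies. -/
def IsClSy {S : Type u} {A : S → Type u} (𝒞 : Set (∀ s, Set (A s))) : Prop :=
  (fun _ => Set.univ) ∈ 𝒞 ∧
    ∀ 𝒟 : Set (∀ s, Set (A s)), 𝒟 ⊆ 𝒞 → 𝒟.Nonempty → sInf 𝒟 ∈ 𝒞

variable {S T : Type u} (φ : S → T)

/-- The `T`-sorted set `∐_φ A` induced by an `S`-sorted set `A`. -/
def Cop (A : S → Type u) : T → Type u := fun t => Σ s : {s : S // φ s = t}, A s.val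

/-- The `T`-sorted subset `∐_φ X` of `∐_φ A` induced by an `S`-sorted subset `X` of `A`. -/
def copSet {A : S → Type u} (X : ∀ s, Set (A s)) : ∀ t, Set (Cop φ A t) :=
  fun _ => {p | p.2 ∈ X p.1.val}

/-- The reindexing `Δ_φ[𝒟]` of a family of `T`-sorted subsets of `B`. -/
def deltaSet {B : T → Type u} (𝒟 : Set (∀ t, Set (B t))) : Set (∀ s, Set (B (φ s))) :=
  (fun (X : ∀ t, Set (B t)) => fun s : S => X (φ s)) '' 𝒟

/-- The transpose `f^♯ : ∐_φ A → B` of an `S`-sorted mapping `f : A → B_φ`. -/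
def sharp {A : S → Type u} {B : T → Type u} (f : ∀ s, A s → B (φ s)) :
    ∀ t, Cop φ A t → B t :=
  fun _ p => p.1.property ▸ f p.1.val p.2


lemma sharp_preimage {A : S → Type u} {B : T → Type u} (f : ∀ s, A s → B (φ s))
    (Y : ∀ t, Set (B t)) :
    (fun t => sharp φ f t ⁻¹' Y t) = copSet φ (fun s => f s ⁻¹' Y (φ s)) := by
  funext t
  ext ⟨⟨s, h⟩, a⟩
  subst h
  rfl

lemma copSet_injective {A : S → Type u} {X X' : ∀ s, Set (A s)}
    (h : copSet φ X = copSet φ X') : X = X' := by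
  funext s
  ext a
  have := congrFun h (φ s)
  exact Set.ext_iff.mp this ⟨⟨s, rfl⟩, a⟩

/-- `f : A → B_φ` is continuous w.r.t. `𝒞` and `Δ_φ[𝒟]` iff `f^♯ : ∐_φ A → B` is continuous
w.r.t. `∐_φ[𝒞]` and `𝒟`; moreover `f ↦ f^♯` is the (bijective) hom-set correspondence of the
adjunction `∐_φ ⊣ Δ_φ`, so it restricts to a bijection between the sets of continuous maps. -/
theorem continuous_iff_sharp_continuous (A : S → Type u) (B : T → Type u)
    (𝒞 : Set (∀ s, Set (A s))) (h𝒞 : IsClSy 𝒞)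
    (𝒟 : Set (∀ t, Set (B t))) (h𝒟 : IsClSy 𝒟) :
    Function.Bijective (fun f : ∀ s, A s → B (φ s) => sharp φ f) ∧
      ∀ f : ∀ s, A s → B (φ s),
        (∀ Y ∈ deltaSet φ 𝒟, (fun s => f s ⁻¹' Y s) ∈ 𝒞) ↔
          ∀ Y ∈ 𝒟, (fun t => sharp φ f t ⁻¹' Y t) ∈ (copSet φ (A := A)) '' 𝒞 := by
  constructor
  · constructor
    · intro f g h
      funext s a
      have := congrFun (congrFun h (φ s)) ⟨⟨s, rfl⟩, a⟩
      simpa [sharp] using this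
    · intro g
      refine ⟨fun s a => g (φ s) ⟨⟨s, rfl⟩, a⟩, ?_⟩
      funext t p
      obtain ⟨⟨s, h⟩, a⟩ := p
      subst h
      rfl
  · intro f
    constructor
    · intro hf Y hY
      rw [sharp_preimage]
      exact ⟨_, hf _ ⟨Y, hY, rfl⟩, rfl⟩
    · rintro hg Z ⟨Y, hY, rfl⟩
      obtain ⟨X, hX, hXeq⟩ := hg Y hY
      rw [sharp_preimage] at hXeq
      rwa [copSet_injective φ hXeq] at hX


end Stmt13
end

section
/- Let (S, A) be a many-sorted set, I a set, and for each i ∈ I let (S_i, A^i, 𝒞^i) be a closure space (A^i an S_i-sorted set and 𝒞^i an S_i-closure system on A^i) and (φ_i, f^i) a many-sorted mapping from (S, A) to (S_i, A^i), i.e., φ_i : S → S_i and f^i : A → A^i_{φ_i}. Then there exists a unique S-closure system 𝒞 on A (the optimal lift) such that: (1) for every i ∈ I and every C ∈ 𝒞^i, (f^i)⁻¹[C_{φ_i}] ∈ 𝒞; and (2) for every closure space (T, B, 𝒟) and every many-sorted mapping (ψ, g) : (T, B) → (S, A), if for every i ∈ I and every C ∈ 𝒞^i one has ((f^i)_ψ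 ∘ g)⁻¹[C_{φ_i∘ψ}] ∈ 𝒟, then g⁻¹[X_ψ] ∈ 𝒟 for every X ∈ 𝒞. -/
universe u

namespace Stmt15

/-- `𝒞` is a closure system on a sorted set: it contains the total sorted subset and is closed
under (componentwise) intersections of nonempty subfamilies. -/
def IsClSy {S : Type u} {A : S → Type u} (𝒞 : Set (∀ s, Set (A s))) : Prop :=
  (fun _ => Set.univ) ∈ 𝒞 ∧
    ∀ 𝒟 : Set (∀ s, Set (A s)), 𝒟 ⊆ 𝒞 → 𝒟.Nonempty → sInf 𝒟 ∈ 𝒞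

/-- **Optimal lifts of closure systems.** Given a family of closure spaces `(Sᵢ, Aⁱ, 𝒞ⁱ)` and of
many-sorted mappings `(φᵢ, fⁱ) : (S, A) → (Sᵢ, Aⁱ)`, there is a unique `S`-closure system `𝒞`
on `A` making every `(φᵢ, fⁱ)` continuous and couniversal with this property. -/
theorem optimal_lift {S : Type u} (A : S → Type u) {I : Type u}
    (Si : I → Type u) (Ai : ∀ i, Si i → Type u)
    (𝒞i : ∀ i, Set (∀ s, Set (Ai i s))) (h𝒞i : ∀ i, IsClSy (𝒞i i))
    (φi : ∀ i, S → Si i) (fi : ∀ i, ∀ s : S, A s → Ai i (φi i s)) :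
    ∃! 𝒞 : Set (∀ s, Set (A s)),
      IsClSy 𝒞 ∧
        (∀ i, ∀ X ∈ 𝒞i i, (fun s => fi i s ⁻¹' X (φi i s)) ∈ 𝒞) ∧
        ∀ (T : Type u) (Bc : T → Type u) (𝒟 : Set (∀ t, Set (Bc t))), IsClSy 𝒟 →
          ∀ (ψ : T → S) (g : ∀ t, Bc t → A (ψ t)),
            (∀ i, ∀ X ∈ 𝒞i i,
              (fun t => {b : Bc t | fi i (ψ t) (g t b) ∈ X (φi i (ψ t))}) ∈ 𝒟) →
            ∀ Y ∈ 𝒞, (fun t => g t ⁻¹' Y (ψ t)) ∈ 𝒟 := by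
  classical
  -- the generating set
  set G : Set (∀ s, Set (A s)) :=
    {Y | ∃ i, ∃ X ∈ 𝒞i i, Y = fun s => fi i s ⁻¹' X (φi i s)} with hGdef
  -- the candidate closure system
  set 𝒞₀ : Set (∀ s, Set (A s)) := {Y | ∃ 𝒢, 𝒢 ⊆ G ∧ Y = sInf 𝒢} with h𝒞₀def
  have htop : (fun _ => Set.univ : ∀ s, Set (A s)) = sInf (∅ : Set (∀ s, Set (A s))) := by
    funext s; simp [sInf_apply]
  have hclsy : IsClSy 𝒞₀ := by
    constructor
    · exact ⟨∅, by simp, htop⟩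
    · intro 𝒟 h𝒟sub _
      refine ⟨{Y | Y ∈ G ∧ sInf 𝒟 ≤ Y}, fun Y hY => hY.1, ?_⟩
      apply le_antisymm
      · exact le_sInf fun Y hY => hY.2
      · refine le_sInf fun D hD => ?_
        obtain ⟨𝒢D, h𝒢DG, rfl⟩ := h𝒟sub hD
        refine le_trans (sInf_le_sInf ?_) le_rfl
        intro Y hY
        exact ⟨h𝒢DG hY, le_trans (sInf_le hD) (sInf_le hY)⟩
  have hgen : ∀ i, ∀ X ∈ 𝒞i i, (fun s => fi i s ⁻¹' X (φi i s)) ∈ 𝒞₀ := by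
    intro i X hX
    exact ⟨{fun s => fi i s ⁻¹' X (φi i s)},
      Set.singleton_subset_iff.2 ⟨i, X, hX, rfl⟩, (sInf_singleton).symm⟩
  have hcouniv : ∀ (T : Type u) (Bc : T → Type u) (𝒟 : Set (∀ t, Set (Bc t))), IsClSy 𝒟 →
      ∀ (ψ : T → S) (g : ∀ t, Bc t → A (ψ t)),
        (∀ i, ∀ X ∈ 𝒞i i,
          (fun t => {b : Bc t | fi i (ψ t) (g t b) ∈ X (φi i (ψ t))}) ∈ 𝒟) →
        ∀ Y ∈ 𝒞₀, (fun t => g t ⁻¹' Y (ψ t)) ∈ 𝒟 := by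
    intro T Bc 𝒟 h𝒟 ψ g hcond Y hY
    obtain ⟨𝒢, h𝒢G, rfl⟩ := hY
    by_cases hne : 𝒢.Nonempty
    · have key : (fun t => g t ⁻¹' (sInf 𝒢) (ψ t))
          = sInf ((fun Z => (fun t => g t ⁻¹' Z (ψ t))) '' 𝒢) := by
        funext t
        ext b
        simp [sInf_apply, Set.preimage, iInf]
      rw [key]
      refine h𝒟.2 _ ?_ (hne.image _)
      rintro _ ⟨Z, hZ, rfl⟩
      obtain ⟨i, X, hX, rfl⟩ := h𝒢G hZ
      exact hcond i X hX
    · rw [Set.not_nonempty_iff_eq_empty] at hne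
      subst hne
      have : (fun t => g t ⁻¹' (sInf (∅ : Set (∀ s, Set (A s)))) (ψ t))
          = (fun _ => Set.univ : ∀ t, Set (Bc t)) := by
        funext t; rw [← htop]; ext b; simp
      rw [this]
      exact h𝒟.1
  refine ⟨𝒞₀, ⟨hclsy, hgen, hcouniv⟩, ?_⟩
  rintro 𝒞' ⟨h1', h2', h3'⟩
  apply Set.Subset.antisymm
  · -- 𝒞' ⊆ 𝒞₀ via clause 3 of 𝒞' applied with (S, A, 𝒞₀) and identities
    intro Y hY
    have := h3' S A 𝒞₀ hclsy id (fun s b => b) (fun i X hX => hgen i X hX) Y hY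
    simpa using this
  · -- 𝒞₀ ⊆ 𝒞' via our couniversality applied with (S, A, 𝒞')
    intro Y hY
    have := hcouniv S A 𝒞' h1' id (fun s b => b) (fun i X hX => h2' i X hX) Y hY
    simpa using this

end Stmt15
end

section
/- Let J : C → C' and K : C' → C be functors with J left adjoint to K, with unit η̄ : Id_C ⟹ K∘J and counit ε̄ : J∘K ⟹ Id_{C'}, and let T : C → C and T' : C' → C' be functors. Then the four mappings between sets of natural transformations — λ₀ ↦ (K ⋆ λ₀) ∘ (η̄ ⋆ T) from Nat(J∘T, T'∘J) to Nat(T, K∘T'∘J); λ₀ ↦ (T' ⋆ ε̄) ∘ (λ₀ ⋆ K) from Nat(J∘T, T'∘J) to Nat(J∘T∘K, T'); λ₁ ↦ (K ⋆ T' ⋆ ε̄) ∘ (λ₁ ⋆ K) from Nat(T, K∘T'∘J) to Nat(T∘K, K∘T'); and λ₂ ↦ (K ⋆ λ₂) ∘ (η̄ ⋆ T∘K) from Nat(J∘T∘K, T') to Nat(T∘K, K∘T') — are all bijections, and the resulting square of bijections commutes: for every λ₀ ∈ Nat(J∘T, T'∘J), applying the first map followed by the third yields the same element of Nat(T∘K,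 K∘T') as applying the second map followed by the fourth. -/
open CategoryTheory

universe v₁ u₁ v₂ u₂

namespace Stmt19

variable {C : Type u₁} [Category.{v₁} C] {C' : Type u₂} [Category.{v₂} C']

/-- `λ₀ ↦ (K ⋆ λ₀) ∘ (η̄ ⋆ T)`, from `Nat(J∘T, T'∘J)` to `Nat(T, K∘T'∘J)`. -/
def m1 (J : C ⥤ C') (K : C' ⥤ C) (adj : J ⊣ K) (T : C ⥤ C) (T' : C' ⥤ C')
    (lam : T ⋙ J ⟶ J ⋙ T') : T ⟶ J ⋙ T' ⋙ K where
  app c := adj.unit.app (T.obj c) ≫ K.map (lam.app c)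
  naturality c d f := by
    have h := lam.naturality f
    dsimp at h ⊢
    rw [← adj.unit_naturality_assoc (T.map f), ← K.map_comp, h, K.map_comp, Category.assoc]

/-- `λ₀ ↦ (T' ⋆ ε̄) ∘ (λ₀ ⋆ K)`, from `Nat(J∘T, T'∘J)` to `Nat(J∘T∘K, T')`. -/
def m2 (J : C ⥤ C') (K : C' ⥤ C) (adj : J ⊣ K) (T : C ⥤ C) (T' : C' ⥤ C')
    (lam : T ⋙ J ⟶ J ⋙ T') : K ⋙ T ⋙ J ⟶ T' where
  app c' := lam.app (K.obj c') ≫ T'.map (adj.counit.app c')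
  naturality c' d' f := by
    have h := lam.naturality (K.map f)
    dsimp at h ⊢
    rw [← Category.assoc, h, Category.assoc, ← T'.map_comp, adj.counit_naturality f,
      T'.map_comp, Category.assoc]

/-- `λ₁ ↦ (K ⋆ T' ⋆ ε̄) ∘ (λ₁ ⋆ K)`, from `Nat(T, K∘T'∘J)` to `Nat(T∘K, K∘T')`. -/
def m3 (J : C ⥤ C') (K : C' ⥤ C) (adj : J ⊣ K) (T : C ⥤ C) (T' : C' ⥤ C')
    (lam : T ⟶ J ⋙ T' ⋙ K) : K ⋙ T ⟶ T' ⋙ K where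
  app c' := lam.app (K.obj c') ≫ K.map (T'.map (adj.counit.app c'))
  naturality c' d' f := by
    have h := lam.naturality (K.map f)
    dsimp at h ⊢
    rw [← Category.assoc, h, Category.assoc, ← K.map_comp, ← T'.map_comp,
      adj.counit_naturality f, T'.map_comp, K.map_comp, Category.assoc]

/-- `λ₂ ↦ (K ⋆ λ₂) ∘ (η̄ ⋆ T∘K)`, from `Nat(J∘T∘K, T')` to `Nat(T∘K, K∘T')`. -/
def m4 (J : C ⥤ C') (K : C' ⥤ C) (adj : J ⊣ K) (T : C ⥤ C) (T' : C' ⥤ C')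
    (lam : K ⋙ T ⋙ J ⟶ T') : K ⋙ T ⟶ T' ⋙ K where
  app c' := adj.unit.app (T.obj (K.obj c')) ≫ K.map (lam.app c')
  naturality c' d' f := by
    have h := lam.naturality f
    dsimp at h ⊢
    rw [← adj.unit_naturality_assoc (T.map (K.map f)), ← K.map_comp, h, K.map_comp,
      Category.assoc]

/-- Inverse of `m1`. -/
def inv1 (J : C ⥤ C') (K : C' ⥤ C) (adj : J ⊣ K) (T : C ⥤ C) (T' : C' ⥤ C')
    (mu : T ⟶ J ⋙ T' ⋙ K) : T ⋙ J ⟶ J ⋙ T' where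
  app c := J.map (mu.app c) ≫ adj.counit.app (T'.obj (J.obj c))
  naturality c d f := by
    have h := mu.naturality f
    dsimp at h ⊢
    rw [← Category.assoc, ← J.map_comp, h, J.map_comp, Category.assoc,
      adj.counit_naturality, Category.assoc]

/-- Inverse of `m2`. -/
def inv2 (J : C ⥤ C') (K : C' ⥤ C) (adj : J ⊣ K) (T : C ⥤ C) (T' : C' ⥤ C')
    (nu : K ⋙ T ⋙ J ⟶ T') : T ⋙ J ⟶ J ⋙ T' where
  app c := J.map (T.map (adj.unit.app c)) ≫ nu.app (J.obj c)
  naturality c d f := by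
    have h := nu.naturality (J.map f)
    dsimp at h ⊢
    rw [Category.assoc, ← h, ← Category.assoc, ← J.map_comp, ← T.map_comp,
      ← adj.unit_naturality, T.map_comp, J.map_comp, Category.assoc]

/-- Inverse of `m3`. -/
def inv3 (J : C ⥤ C') (K : C' ⥤ C) (adj : J ⊣ K) (T : C ⥤ C) (T' : C' ⥤ C')
    (mu : K ⋙ T ⟶ T' ⋙ K) : T ⟶ J ⋙ T' ⋙ K where
  app c := T.map (adj.unit.app c) ≫ mu.app (J.obj c)
  naturality c d f := by
    have h := mu.naturality (J.map f)
    dsimp at h ⊢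
    rw [Category.assoc, ← h, ← Category.assoc, ← T.map_comp,
      ← adj.unit_naturality, T.map_comp, Category.assoc]

/-- Inverse of `m4`. -/
def inv4 (J : C ⥤ C') (K : C' ⥤ C) (adj : J ⊣ K) (T : C ⥤ C) (T' : C' ⥤ C')
    (mu : K ⋙ T ⟶ T' ⋙ K) : K ⋙ T ⋙ J ⟶ T' where
  app c' := J.map (mu.app c') ≫ adj.counit.app (T'.obj c')
  naturality c' d' f := by
    have h := mu.naturality f
    dsimp at h ⊢
    rw [← Category.assoc, ← J.map_comp, h, J.map_comp, Category.assoc,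
      adj.counit_naturality, Category.assoc]

/-- Given an adjunction `J ⊣ K` (with unit `η̄` and counit `ε̄`) and endofunctors `T`, `T'`, the
four canonical mappings between the sets of natural transformations `Nat(J∘T, T'∘J)`,
`Nat(T, K∘T'∘J)`, `Nat(J∘T∘K, T')` and `Nat(T∘K, K∘T')` are bijections, and the resulting
square of bijections commutes. -/
theorem adjoint_square_bijections (J : C ⥤ C') (K : C' ⥤ C) (adj : J ⊣ K)
    (T : C ⥤ C) (T' : C' ⥤ C') :
    Function.Bijective (m1 J K adj T T') ∧
    Function.Bijective (m2 J K adj T T') ∧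
    Function.Bijective (m3 J K adj T T') ∧
    Function.Bijective (m4 J K adj T T') ∧
    ∀ lam : T ⋙ J ⟶ J ⋙ T',
      m3 J K adj T T' (m1 J K adj T T' lam) = m4 J K adj T T' (m2 J K adj T T' lam) := by
  refine ⟨?_, ?_, ?_, ?_, ?_⟩
  · rw [Function.bijective_iff_has_inverse]
    refine ⟨inv1 J K adj T T', fun lam => ?_, fun mu => ?_⟩
    · ext c
      dsimp [m1, inv1]
      rw [J.map_comp, Category.assoc, adj.counit_naturality, ← Category.assoc,
        adj.left_triangle_components, Category.id_comp]
    · ext c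
      dsimp [m1, inv1]
      rw [K.map_comp, adj.unit_naturality_assoc, adj.right_triangle_components,
        Category.comp_id]
  · rw [Function.bijective_iff_has_inverse]
    refine ⟨inv2 J K adj T T', fun lam => ?_, fun nu => ?_⟩
    · ext c
      have h := lam.naturality (adj.unit.app c)
      dsimp [m2, inv2] at h ⊢
      rw [← Category.assoc, h, Category.assoc, ← T'.map_comp,
        adj.left_triangle_components, T'.map_id, Category.comp_id]
    · ext c'
      have h := nu.naturality (adj.counit.app c')
      dsimp [m2, inv2] at h ⊢
      rw [Category.assoc, ← h, ← Category.assoc, ← J.map_comp, ← T.map_comp,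
        adj.right_triangle_components, T.map_id, J.map_id, Category.id_comp]
  · rw [Function.bijective_iff_has_inverse]
    refine ⟨inv3 J K adj T T', fun lam => ?_, fun mu => ?_⟩
    · ext c
      have h := lam.naturality (adj.unit.app c)
      dsimp [m3, inv3] at h ⊢
      rw [← Category.assoc, h, Category.assoc, ← K.map_comp, ← T'.map_comp,
        adj.left_triangle_components, T'.map_id, K.map_id, Category.comp_id]
    · ext c'
      have h := mu.naturality (adj.counit.app c')
      dsimp [m3, inv3] at h ⊢
      rw [Category.assoc, ← h, ← Category.assoc, ← T.map_comp,
        adj.right_triangle_components, T.map_id, Category.id_comp]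
  · rw [Function.bijective_iff_has_inverse]
    refine ⟨inv4 J K adj T T', fun lam => ?_, fun mu => ?_⟩
    · ext c'
      dsimp [m4, inv4]
      rw [J.map_comp, Category.assoc, adj.counit_naturality, ← Category.assoc,
        adj.left_triangle_components, Category.id_comp]
    · ext c'
      dsimp [m4, inv4]
      rw [K.map_comp, adj.unit_naturality_assoc, adj.right_triangle_components,
        Category.comp_id]
  · intro lam
    ext c'
    dsimp [m1, m2, m3, m4]
    rw [K.map_comp, Category.assoc]

end Stmt19
end
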